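/- arXiv:1003.3528 — 3 statements merged into one kernel-verified Lean document; each statement's English description precedes it below -/
import Mathlib

section
/- Let I, J be disjoint nonempty subsets of {1,...,m}. The cone generated by the vectors e_k + e_j (k ∈ I, j ∈ J) together with 2e_l (l ∉ I ∪ J) equals the intersection of the nonnegative orthant {x ∈ Q^m : x_i ≥ 0} with the hyperplane Σ_{i∈I} x_i = Σ_{j∈J} x_j, and this cone has dimension m − 1. -/
private lemma sum_single_mem {m : ℕ} (s : Finset (Fin m)) (a : Fin m) :
    ∑ t ∈ s, Pi.single a (1:ℚ) t = if a ∈ s then 1 else 0 := by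
  simp [Pi.single_apply, Finset.sum_ite_eq']

private lemma single_nonneg' {m : ℕ} (a t : Fin m) : (0:ℚ) ≤ (Pi.single a 1 : Fin m → ℚ) t := by
  rw [Pi.single_apply]; split_ifs <;> norm_num

/-- Sum over a set `K` which separates the supports. -/
private lemma cone_sum {m : ℕ} (K : Finset (Fin m)) (c : Fin m × Fin m → ℚ) (d : Fin m → ℚ)
    (hK1 : ∀ p, c p ≠ 0 → ((p.1 ∈ K ∧ p.2 ∉ K) ∨ (p.1 ∉ K ∧ p.2 ∈ K)))
    (hK2 : ∀ l ∈ K, d l = 0) :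
    ∑ t ∈ K, ((∑ p : Fin m × Fin m, c p • (Pi.single p.1 (1:ℚ) + Pi.single p.2 1))
        + ∑ l : Fin m, d l • (2 • Pi.single l (1:ℚ))) t = ∑ p : Fin m × Fin m, c p := by
  simp only [two_nsmul, Pi.add_apply, Finset.sum_apply, Pi.smul_apply, smul_eq_mul]
  rw [Finset.sum_add_distrib, Finset.sum_comm, Finset.sum_comm (s := K)]
  have h2 : ∑ l : Fin m, ∑ t ∈ K,
      d l * ((Pi.single l 1 : Fin m → ℚ) t + (Pi.single l 1 : Fin m → ℚ) t) = 0 := by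
    apply Finset.sum_eq_zero
    intro l _
    rcases eq_or_ne (d l) 0 with h | h
    · simp [h]
    · have hl : l ∉ K := fun hl => h (hK2 l hl)
      rw [← Finset.mul_sum, Finset.sum_add_distrib, sum_single_mem]
      simp [hl]
  rw [h2, add_zero]
  apply Finset.sum_congr rfl
  intro p _
  rcases eq_or_ne (c p) 0 with h | h
  · simp [h]
  · rw [← Finset.mul_sum, Finset.sum_add_distrib, sum_single_mem, sum_single_mem]
    rcases hK1 p h with ⟨h1, h2⟩ | ⟨h1, h2⟩ <;> simp [h1, h2]

private lemma aux_set {m : ℕ} (I J : Finset (Fin m)) (hIJ : Disjoint I J) :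
    {x : Fin m → ℚ | ∃ (c : Fin m × Fin m → ℚ) (d : Fin m → ℚ),
        (∀ p, 0 ≤ c p) ∧ (∀ l, 0 ≤ d l) ∧
        (∀ p : Fin m × Fin m, ¬(p.1 ∈ I ∧ p.2 ∈ J) → c p = 0) ∧
        (∀ l, l ∈ I ∪ J → d l = 0) ∧
        x = (∑ p : Fin m × Fin m, c p • (Pi.single p.1 (1 : ℚ) + Pi.single p.2 (1 : ℚ)))
            + ∑ l : Fin m, d l • (2 • Pi.single l (1 : ℚ))} =
      {x : Fin m → ℚ | (∀ i, 0 ≤ x i) ∧ ∑ i ∈ I, x i = ∑ j ∈ J, x j} := by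
  ext x
  simp only [Set.mem_setOf_eq]
  constructor
  · rintro ⟨c, d, hc, hd, hcs, hds, rfl⟩
    constructor
    · intro t
      simp only [two_nsmul, Pi.add_apply, Finset.sum_apply, Pi.smul_apply, smul_eq_mul]
      apply add_nonneg <;> apply Finset.sum_nonneg <;> intro p _ <;>
        apply mul_nonneg (by first | exact hc p | exact hd p) <;>
        exact add_nonneg (single_nonneg' _ _) (single_nonneg' _ _)
    · have hcsupp : ∀ p, c p ≠ 0 → p.1 ∈ I ∧ p.2 ∈ J := by
        intro p hp
        by_contra h
        exact hp (hcs p h)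
      rw [cone_sum I c d (fun p hp => Or.inl ⟨(hcsupp p hp).1,
            Finset.disjoint_right.mp hIJ (hcsupp p hp).2⟩)
          (fun l hl => hds l (Finset.mem_union_left _ hl)),
        cone_sum J c d (fun p hp => Or.inr ⟨Finset.disjoint_left.mp hIJ (hcsupp p hp).1,
            (hcsupp p hp).2⟩)
          (fun l hl => hds l (Finset.mem_union_right _ hl))]
  · rintro ⟨hx0, hxs⟩
    set S := ∑ i ∈ I, x i with hS
    have hS0 : 0 ≤ S := Finset.sum_nonneg fun i _ => hx0 i
    have hzero : S = 0 → ∀ i, i ∈ I ∪ J → x i = 0 := by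
      intro h i hi
      rcases Finset.mem_union.mp hi with hi | hi
      · exact (Finset.sum_eq_zero_iff_of_nonneg fun i _ => hx0 i).mp h i hi
      · exact (Finset.sum_eq_zero_iff_of_nonneg fun i _ => hx0 i).mp (hxs ▸ h) i hi
    refine ⟨fun p => if p.1 ∈ I ∧ p.2 ∈ J then x p.1 * x p.2 / S else 0,
        fun l => if l ∈ I ∪ J then 0 else x l / 2, ?_, ?_, ?_, ?_, ?_⟩
    · intro p
      dsimp only
      split_ifs with h
      · exact div_nonneg (mul_nonneg (hx0 _) (hx0 _)) hS0
      · exact le_refl 0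
    · intro l
      dsimp only
      split_ifs
      · exact le_refl 0
      · exact div_nonneg (hx0 _) (by norm_num)
    · intro p hp
      simp [hp]
    · intro l hl
      simp [hl]
    · funext t
      simp only [two_nsmul, Pi.add_apply, Finset.sum_apply, Pi.smul_apply, smul_eq_mul,
        Pi.single_apply]
      have e1 : ∀ p : Fin m × Fin m,
          (if p.1 ∈ I ∧ p.2 ∈ J then x p.1 * x p.2 / S else 0) *
            ((if t = p.1 then (1:ℚ) else 0) + (if t = p.2 then 1 else 0))
          = (if t = p.1 then (if p.1 ∈ I ∧ p.2 ∈ J then x p.1 * x p.2 / S else 0) else 0)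
            + (if t = p.2 then (if p.1 ∈ I ∧ p.2 ∈ J then x p.1 * x p.2 / S else 0) else 0) := by
        intro p; split_ifs <;> ring
      rw [Finset.sum_congr rfl fun p _ => e1 p, Finset.sum_add_distrib]
      have e2 : ∑ p : Fin m × Fin m,
          (if t = p.1 then (if p.1 ∈ I ∧ p.2 ∈ J then x p.1 * x p.2 / S else 0) else 0)
          = ∑ b : Fin m, (if t ∈ I ∧ b ∈ J then x t * x b / S else 0) := by
        rw [Fintype.sum_prod_type]
        simp [Finset.sum_ite_eq]
      have e3 : ∑ p : Fin m × Fin m,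
          (if t = p.2 then (if p.1 ∈ I ∧ p.2 ∈ J then x p.1 * x p.2 / S else 0) else 0)
          = ∑ a : Fin m, (if a ∈ I ∧ t ∈ J then x a * x t / S else 0) := by
        rw [Fintype.sum_prod_type_right]
        simp [Finset.sum_ite_eq]
      have e4 : ∑ l : Fin m,
          (if l ∈ I ∪ J then (0:ℚ) else x l / 2) *
            ((if t = l then (1:ℚ) else 0) + (if t = l then 1 else 0))
          = if t ∈ I ∪ J then 0 else x t := by
        have h : ∀ l : Fin m, (if l ∈ I ∪ J then (0:ℚ) else x l / 2) *
            ((if t = l then (1:ℚ) else 0) + (if t = l then 1 else 0))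
            = if t = l then (if l ∈ I ∪ J then 0 else x l) else 0 := by
          intro l; split_ifs <;> ring
        rw [Finset.sum_congr rfl fun l _ => h l, Finset.sum_ite_eq]
        simp
      rw [e2, e3, e4]
      by_cases htI : t ∈ I
      · have htJ : t ∉ J := Finset.disjoint_left.mp hIJ htI
        simp only [htI, htJ, true_and, and_false, if_false, Finset.mem_union, true_or,
          if_true, Finset.sum_const_zero, add_zero]
        have h5 : ∑ b : Fin m, (if b ∈ J then x t * x b / S else 0)
            = x t * (∑ b ∈ J, x b) / S := by
          rw [Finset.sum_ite_mem, Finset.univ_inter, ← Finset.sum_div, ← Finset.mul_sum]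
        rw [h5, ← hxs]
        rcases eq_or_ne S 0 with h | h
        · rw [hzero h t (Finset.mem_union_left _ htI), h]; simp
        · field_simp
      · by_cases htJ : t ∈ J
        · simp only [htI, false_and, if_false, htJ, and_true, Finset.mem_union, or_true,
            if_true, Finset.sum_const_zero, zero_add, add_zero]
          have h5 : ∑ a : Fin m, (if a ∈ I then x a * x t / S else 0)
              = (∑ a ∈ I, x a) * x t / S := by
            rw [Finset.sum_ite_mem, Finset.univ_inter, ← Finset.sum_div, ← Finset.sum_mul]
          rw [h5, ← hS]
          rcases eq_or_ne S 0 with h | h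
          · rw [hzero h t (Finset.mem_union_right _ htJ), h]; simp
          · field_simp
        · have ht : t ∉ I ∪ J := by simp [htI, htJ]
          simp [htI, htJ, ht]

private lemma aux_rank {m : ℕ} (I J : Finset (Fin m)) (hI : I.Nonempty) (hJ : J.Nonempty)
    (hIJ : Disjoint I J) :
    Module.finrank ℚ (Submodule.span ℚ
      {x : Fin m → ℚ | (∀ i, 0 ≤ x i) ∧ ∑ i ∈ I, x i = ∑ j ∈ J, x j}) = m - 1 := by
  obtain ⟨i0, hi0⟩ := hI
  obtain ⟨j0, hj0⟩ := hJ
  have hi0J : i0 ∉ J := Finset.disjoint_left.mp hIJ hi0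
  have hj0I : j0 ∉ I := Finset.disjoint_right.mp hIJ hj0
  set Sset : Set (Fin m → ℚ) :=
    {x : Fin m → ℚ | (∀ i, 0 ≤ x i) ∧ ∑ i ∈ I, x i = ∑ j ∈ J, x j} with hSset
  set f : (Fin m → ℚ) →ₗ[ℚ] ℚ :=
    (∑ i ∈ I, LinearMap.proj i) - ∑ j ∈ J, LinearMap.proj j with hf
  have hfx : ∀ x : Fin m → ℚ, f x = ∑ i ∈ I, x i - ∑ j ∈ J, x j := by
    intro x
    simp [hf, LinearMap.sum_apply]
  have hspan : Submodule.span ℚ Sset = LinearMap.ker f := by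
    apply le_antisymm
    · rw [Submodule.span_le]
      rintro x ⟨-, hx2⟩
      simp only [SetLike.mem_coe, LinearMap.mem_ker, hfx, sub_eq_zero]
      exact hx2
    · intro x hx
      rw [LinearMap.mem_ker, hfx, sub_eq_zero] at hx
      set N := Submodule.span ℚ Sset with hN
      have h1 : ∀ t, t ∉ I → t ∉ J → (Pi.single t 1 : Fin m → ℚ) ∈ N := by
        intro t ht1 ht2
        apply Submodule.subset_span
        refine ⟨single_nonneg' t, ?_⟩
        rw [sum_single_mem, sum_single_mem]
        simp [ht1, ht2]
      have h2 : ∀ t ∈ I, (Pi.single t 1 + Pi.single j0 1 : Fin m → ℚ) ∈ N := by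
        intro t ht
        apply Submodule.subset_span
        refine ⟨fun s => add_nonneg (single_nonneg' t s) (single_nonneg' j0 s), ?_⟩
        simp only [Pi.add_apply, Finset.sum_add_distrib, sum_single_mem]
        simp [ht, hj0, hj0I, Finset.disjoint_left.mp hIJ ht]
      have h3 : ∀ t ∈ J, (Pi.single i0 1 + Pi.single t 1 : Fin m → ℚ) ∈ N := by
        intro t ht
        apply Submodule.subset_span
        refine ⟨fun s => add_nonneg (single_nonneg' i0 s) (single_nonneg' t s), ?_⟩
        simp only [Pi.add_apply, Finset.sum_add_distrib, sum_single_mem]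
        simp [hi0, ht, hi0J, Finset.disjoint_right.mp hIJ ht]
      have hxeq : x = (∑ t ∈ (I ∪ J)ᶜ, x t • (Pi.single t 1 : Fin m → ℚ))
          + (∑ t ∈ I, x t • (Pi.single t 1 + Pi.single j0 1 : Fin m → ℚ))
          + (∑ t ∈ J, x t • (Pi.single i0 1 + Pi.single t 1 : Fin m → ℚ))
          - (∑ j ∈ J, x j) • (Pi.single i0 1 + Pi.single j0 1 : Fin m → ℚ) := by
        funext t
        by_cases htI : t ∈ I <;> by_cases htJ : t ∈ J <;>
          by_cases hti0 : t = i0 <;> by_cases htj0 : t = j0 <;>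
          simp_all [Pi.single_apply, Finset.sum_ite_eq, mul_add, mul_ite, mul_one, mul_zero,
            Finset.sum_add_distrib, Finset.mem_compl, Finset.mem_union,
            Finset.disjoint_left.mp hIJ]
      rw [hxeq]
      refine Submodule.sub_mem N (Submodule.add_mem N (Submodule.add_mem N
        (Submodule.sum_mem N fun t ht => Submodule.smul_mem N _ ?_)
        (Submodule.sum_mem N fun t ht => Submodule.smul_mem N _ (h2 t ht)))
        (Submodule.sum_mem N fun t ht => Submodule.smul_mem N _ (h3 t ht)))
        (Submodule.smul_mem N _ (h2 i0 hi0))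
      rw [Finset.mem_compl, Finset.mem_union] at ht
      push_neg at ht
      exact h1 t ht.1 ht.2
  rw [hspan]
  have hsurj : Function.Surjective f := by
    intro r
    refine ⟨r • (Pi.single i0 1 : Fin m → ℚ), ?_⟩
    rw [map_smul, hfx]
    simp only [smul_eq_mul, sum_single_mem, hi0, hi0J]
    simp
  have hrk := LinearMap.finrank_range_add_finrank_ker f
  rw [LinearMap.range_eq_top.2 hsurj, finrank_top] at hrk
  simp only [Module.finrank_fin_fun, Module.finrank_self] at hrk
  omega

/-- For disjoint nonempty `I, J ⊆ {1, ..., m}`, the cone generated by the vectors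
`e_k + e_j` (`k ∈ I`, `j ∈ J`) and `2 e_l` (`l ∉ I ∪ J`) equals the intersection of
the nonnegative orthant of `ℚ^m` with the hyperplane `∑_{i∈I} xᵢ = ∑_{j∈J} xⱼ`,
and this cone has dimension `m - 1`. -/
theorem stmt_9 {m : ℕ} (I J : Finset (Fin m)) (hI : I.Nonempty) (hJ : J.Nonempty)
    (hIJ : Disjoint I J) :
    {x : Fin m → ℚ | ∃ (c : Fin m × Fin m → ℚ) (d : Fin m → ℚ),
        (∀ p, 0 ≤ c p) ∧ (∀ l, 0 ≤ d l) ∧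
        (∀ p : Fin m × Fin m, ¬(p.1 ∈ I ∧ p.2 ∈ J) → c p = 0) ∧
        (∀ l, l ∈ I ∪ J → d l = 0) ∧
        x = (∑ p : Fin m × Fin m, c p • (Pi.single p.1 (1 : ℚ) + Pi.single p.2 (1 : ℚ)))
            + ∑ l : Fin m, d l • (2 • Pi.single l (1 : ℚ))} =
      {x : Fin m → ℚ | (∀ i, 0 ≤ x i) ∧ ∑ i ∈ I, x i = ∑ j ∈ J, x j} ∧
    Module.finrank ℚ (Submodule.span ℚ
      {x : Fin m → ℚ | (∀ i, 0 ≤ x i) ∧ ∑ i ∈ I, x i = ∑ j ∈ J, x j}) = m - 1 :=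
  ⟨aux_set I J hIJ, aux_rank I J hI hJ hIJ⟩
end

section
/- For the diagonal action of SO_3 on (C^3)^3, the GIT-fan obtained by cutting the cone Ω = {x ∈ Q^3 : x_1,x_2,x_3 ≥ 0} by the six hyperplanes x_1 = x_2, x_1 = x_3, x_2 = x_3, x_1 + x_2 = x_3, x_1 + x_3 = x_2, x_2 + x_3 = x_1 has exactly 12 three-dimensional chambers, 21 two-dimensional cones, and 10 one-dimensional cones (33 GIT-equivalence classes in total, counting relative interiors). -/
namespace Stmt10

/-- The six linear functionals cutting the octant: `x₁-x₂, x₁-x₃, x₂-x₃,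
x₁+x₂-x₃, x₁+x₃-x₂, x₂+x₃-x₁`. -/
def ℓ : Fin 6 → (Fin 3 → ℚ) → ℚ :=
  ![fun x => x 0 - x 1, fun x => x 0 - x 2, fun x => x 1 - x 2,
    fun x => x 0 + x 1 - x 2, fun x => x 0 + x 2 - x 1, fun x => x 1 + x 2 - x 0]

/-- The sign of a rational number. -/
def sgn (q : ℚ) : ℤ := if q < 0 then -1 else if q = 0 then 0 else 1

/-- The sign pattern of a point: signs of the six functionals and of the three
coordinates. -/
def pattern (x : Fin 3 → ℚ) : (Fin 6 → ℤ) × (Fin 3 → ℤ) :=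
  (fun k => sgn (ℓ k x), fun i => sgn (x i))

/-- The (relatively open) cell of the subdivision of the octant corresponding to a
sign pattern `p`: nonzero points of the octant realizing `p`. -/
def cell (p : (Fin 6 → ℤ) × (Fin 3 → ℤ)) : Set (Fin 3 → ℚ) :=
  {x | (∀ i, 0 ≤ x i) ∧ x ≠ 0 ∧ pattern x = p}

/-- The dimension of a cell: the dimension of its linear span. -/
noncomputable def dimOf (C : Set (Fin 3 → ℚ)) : ℕ :=
  Module.finrank ℚ (Submodule.span ℚ C)

abbrev Pat := (Fin 6 → ℤ) × (Fin 3 → ℤ)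

/-! ### Sign helpers -/

lemma sgn_tri (q : ℚ) : (sgn q = -1 ∧ q < 0) ∨ (sgn q = 0 ∧ q = 0) ∨ (sgn q = 1 ∧ 0 < q) := by
  unfold sgn
  rcases lt_trichotomy q 0 with h | h | h
  · exact Or.inl ⟨by simp [h], h⟩
  · exact Or.inr (Or.inl ⟨by simp [h], h⟩)
  · exact Or.inr (Or.inr ⟨by simp [h.ne', not_lt.mpr h.le], h⟩)

lemma sgn_dich {q : ℚ} (hq : 0 ≤ q) : (sgn q = 0 ∧ q = 0) ∨ (sgn q = 1 ∧ 0 < q) := by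
  rcases sgn_tri q with ⟨_, h⟩ | h | h
  · linarith
  · exact Or.inl h
  · exact Or.inr h

lemma sgn_eq_zero {q : ℚ} (h : sgn q = 0) : q = 0 := by
  rcases sgn_tri q with ⟨h',_⟩|⟨_,h'⟩|⟨h',_⟩ <;> first | exact h' | omega

lemma pattern_eq (x : Fin 3 → ℚ) : pattern x =
    (![sgn (x 0 - x 1), sgn (x 0 - x 2), sgn (x 1 - x 2), sgn (x 0 + x 1 - x 2),
       sgn (x 0 + x 2 - x 1), sgn (x 1 + x 2 - x 0)], ![sgn (x 0), sgn (x 1), sgn (x 2)]) := by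
  unfold pattern
  refine Prod.ext ?_ ?_ <;> funext k <;> fin_cases k <;> rfl

lemma pat1 {x : Fin 3 → ℚ} {p : Pat} (h : pattern x = p) (k : Fin 6) : sgn (ℓ k x) = p.1 k :=
  congrFun (congrArg Prod.fst h) k

lemma pat2 {x : Fin 3 → ℚ} {p : Pat} (h : pattern x = p) (i : Fin 3) : sgn (x i) = p.2 i :=
  congrFun (congrArg Prod.snd h) i

lemma mem_cell_of (x : Fin 3 → ℚ) (p : Pat) (h0 : 0 ≤ x 0) (h1 : 0 ≤ x 1) (h2 : 0 ≤ x 2)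
    (hne : ¬(x 0 = 0 ∧ x 1 = 0 ∧ x 2 = 0))
    (hp : ((![sgn (x 0 - x 1), sgn (x 0 - x 2), sgn (x 1 - x 2), sgn (x 0 + x 1 - x 2),
        sgn (x 0 + x 2 - x 1), sgn (x 1 + x 2 - x 0)], ![sgn (x 0), sgn (x 1), sgn (x 2)]) : Pat)
        = p) :
    x ∈ cell p := by
  refine ⟨?_, ?_, (pattern_eq x).trans hp⟩
  · intro i; fin_cases i <;> assumption
  · intro h
    exact hne ⟨congrFun h 0, congrFun h 1, congrFun h 2⟩

lemma vec_ext {x y : Fin 3 → ℚ} (h0 : x 0 = y 0) (h1 : x 1 = y 1) (h2 : x 2 = y 2) : x = y := by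
  funext i; fin_cases i
  · exact h0
  · exact h1
  · exact h2

/-! ### Linear algebra helpers -/

def lmap (c : Fin 3 → ℚ) : (Fin 3 → ℚ) →ₗ[ℚ] ℚ where
  toFun x := c 0 * x 0 + c 1 * x 1 + c 2 * x 2
  map_add' x y := by simp [Pi.add_apply]; ring
  map_smul' t x := by simp [Pi.smul_apply, smul_eq_mul]; ring

lemma finrank_fun3 : Module.finrank ℚ (Fin 3 → ℚ) = 3 := by simp

lemma dim_le_3 (C : Set (Fin 3 → ℚ)) : dimOf C ≤ 3 := by
  have := Submodule.finrank_le (Submodule.span ℚ C)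
  rwa [finrank_fun3] at this

lemma li2 {v w : Fin 3 → ℚ} (i j : Fin 3) (h : v i * w j ≠ v j * w i) :
    LinearIndependent ℚ ![v, w] := by
  rw [LinearIndependent.pair_iff]
  intro s t hst
  have Ei := congrFun hst i
  have Ej := congrFun hst j
  simp only [Pi.add_apply, Pi.smul_apply, smul_eq_mul, Pi.zero_apply] at Ei Ej
  have hD : v i * w j - v j * w i ≠ 0 := sub_ne_zero.mpr h
  have hs : s * (v i * w j - v j * w i) = 0 := by linear_combination w j * Ei - w i * Ej
  have ht : t * (v i * w j - v j * w i) = 0 := by linear_combination v i * Ej - v j * Ei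
  exact ⟨(mul_eq_zero.mp hs).resolve_right hD, (mul_eq_zero.mp ht).resolve_right hD⟩

lemma li3 {u v w : Fin 3 → ℚ}
    (h : u 0*(v 1*w 2 - v 2*w 1) - u 1*(v 0*w 2 - v 2*w 0) + u 2*(v 0*w 1 - v 1*w 0) ≠ 0) :
    LinearIndependent ℚ ![u, v, w] := by
  rw [Fintype.linearIndependent_iff]
  intro g hg
  rw [Fin.sum_univ_three] at hg
  simp only [Matrix.cons_val_zero, Matrix.cons_val_one, Matrix.head_cons,
    Matrix.cons_val_two, Matrix.tail_cons] at hg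
  have E0 := congrFun hg 0
  have E1 := congrFun hg 1
  have E2 := congrFun hg 2
  simp only [Pi.add_apply, Pi.smul_apply, smul_eq_mul, Pi.zero_apply] at E0 E1 E2
  set D := u 0*(v 1*w 2 - v 2*w 1) - u 1*(v 0*w 2 - v 2*w 0) + u 2*(v 0*w 1 - v 1*w 0)
    with hDdef
  have h0 : g 0 * D = 0 := by
    rw [hDdef]
    linear_combination (v 1*w 2 - v 2*w 1) * E0 - (v 0*w 2 - v 2*w 0) * E1
      + (v 0*w 1 - v 1*w 0) * E2
  have h1 : g 1 * D = 0 := by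
    rw [hDdef]
    linear_combination (-(u 1*w 2 - u 2*w 1)) * E0 + (u 0*w 2 - u 2*w 0) * E1
      - (u 0*w 1 - u 1*w 0) * E2
  have h2 : g 2 * D = 0 := by
    rw [hDdef]
    linear_combination (u 1*v 2 - u 2*v 1) * E0 - (u 0*v 2 - u 2*v 0) * E1
      + (u 0*v 1 - u 1*v 0) * E2
  intro i
  fin_cases i
  · exact (mul_eq_zero.mp h0).resolve_right h
  · exact (mul_eq_zero.mp h1).resolve_right h
  · exact (mul_eq_zero.mp h2).resolve_right h

lemma dim_ge_of_li2 {C : Set (Fin 3 → ℚ)} {v w : Fin 3 → ℚ}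
    (hv : v ∈ C) (hw : w ∈ C) (hli : LinearIndependent ℚ ![v, w]) : 2 ≤ dimOf C := by
  have hsub : Set.range ![v, w] ⊆ C := by
    rintro _ ⟨i, rfl⟩; fin_cases i <;> simpa
  have := Submodule.finrank_mono (Submodule.span_mono (R := ℚ) hsub)
  rwa [finrank_span_eq_card hli] at this

lemma dim_ge_of_li3 {C : Set (Fin 3 → ℚ)} {u v w : Fin 3 → ℚ}
    (hu : u ∈ C) (hv : v ∈ C) (hw : w ∈ C) (hli : LinearIndependent ℚ ![u, v, w]) :
    3 ≤ dimOf C := by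
  have hsub : Set.range ![u, v, w] ⊆ C := by
    rintro _ ⟨i, rfl⟩; fin_cases i <;> simpa
  have := Submodule.finrank_mono (Submodule.span_mono (R := ℚ) hsub)
  rwa [finrank_span_eq_card hli] at this

lemma dim_eq_3 {C : Set (Fin 3 → ℚ)} {u v w : Fin 3 → ℚ}
    (hu : u ∈ C) (hv : v ∈ C) (hw : w ∈ C)
    (h : u 0*(v 1*w 2 - v 2*w 1) - u 1*(v 0*w 2 - v 2*w 0) + u 2*(v 0*w 1 - v 1*w 0) ≠ 0) :
    dimOf C = 3 :=
  le_antisymm (dim_le_3 C) (dim_ge_of_li3 hu hv hw (li3 h))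

lemma finrank_ker_lmap {c : Fin 3 → ℚ} {v : Fin 3 → ℚ} (hv : lmap c v ≠ 0) :
    Module.finrank ℚ (LinearMap.ker (lmap c)) = 2 := by
  have hsur : Function.Surjective (lmap c) := by
    intro t
    refine ⟨(t / (lmap c v)) • v, ?_⟩
    rw [map_smul, smul_eq_mul, div_mul_cancel₀ _ hv]
  have := LinearMap.finrank_range_add_finrank_ker (lmap c)
  rw [LinearMap.range_eq_top.mpr hsur, finrank_top, finrank_fun3] at this
  simp at this
  omega

lemma dim_eq_2 {C : Set (Fin 3 → ℚ)} {v w : Fin 3 → ℚ} {c : Fin 3 → ℚ} (x₀ : Fin 3 → ℚ)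
    (hx₀ : lmap c x₀ ≠ 0)
    (hv : v ∈ C) (hw : w ∈ C) (i j : Fin 3) (hmin : v i * w j ≠ v j * w i)
    (hker : ∀ x ∈ C, lmap c x = 0) : dimOf C = 2 := by
  refine le_antisymm ?_ (dim_ge_of_li2 hv hw (li2 i j hmin))
  have hle : Submodule.span ℚ C ≤ LinearMap.ker (lmap c) := by
    rw [Submodule.span_le]
    intro x hx
    exact LinearMap.mem_ker.mpr (hker x hx)
  have := Submodule.finrank_mono hle
  rwa [finrank_ker_lmap hx₀] at this

lemma dim_eq_1 {C : Set (Fin 3 → ℚ)} {v : Fin 3 → ℚ} (hv0 : v ≠ 0) (hv : v ∈ C)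
    (h : ∀ x ∈ C, ∃ t : ℚ, x = t • v) : dimOf C = 1 := by
  refine le_antisymm ?_ ?_
  · have hle : Submodule.span ℚ C ≤ Submodule.span ℚ {v} := by
      rw [Submodule.span_le]
      intro x hx
      obtain ⟨t, rfl⟩ := h x hx
      exact Submodule.smul_mem _ t (Submodule.mem_span_singleton_self v)
    have := Submodule.finrank_mono hle
    rwa [finrank_span_singleton hv0] at this
  · have hle : Submodule.span ℚ {v} ≤ Submodule.span ℚ C :=
      Submodule.span_mono (Set.singleton_subset_iff.mpr hv)
    have := Submodule.finrank_mono hle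
    rwa [finrank_span_singleton hv0] at this

/-! ### The lists of patterns -/

def L3 : List Pat :=
  [(![1, 1, 1, 1, 1, 1], ![1, 1, 1]),
   (![-1, 1, 1, 1, 1, 1], ![1, 1, 1]),
   (![-1, -1, -1, 1, 1, 1], ![1, 1, 1]),
   (![1, -1, -1, 1, 1, 1], ![1, 1, 1]),
   (![-1, -1, 1, 1, 1, 1], ![1, 1, 1]),
   (![1, 1, -1, 1, 1, 1], ![1, 1, 1]),
   (![-1, 1, 1, 1, -1, 1], ![1, 1, 1]),
   (![1, 1, 1, 1, 1, -1], ![1, 1, 1]),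
   (![-1, -1, 1, 1, -1, 1], ![1, 1, 1]),
   (![1, 1, -1, 1, 1, -1], ![1, 1, 1]),
   (![1, -1, -1, -1, 1, 1], ![1, 1, 1]),
   (![-1, -1, -1, -1, 1, 1], ![1, 1, 1])]

def L2 : List Pat :=
  [(![1, 1, 1, 1, 1, -1], ![1, 1, 0]),
   (![-1, 1, 1, 1, -1, 1], ![1, 1, 0]),
   (![-1, -1, 1, 1, -1, 1], ![0, 1, 1]),
   (![-1, -1, -1, -1, 1, 1], ![0, 1, 1]),
   (![1, -1, -1, -1, 1, 1], ![1, 0, 1]),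
   (![1, 1, -1, 1, 1, -1], ![1, 0, 1]),
   (![0, 1, 1, 1, 1, 1], ![1, 1, 1]),
   (![0, -1, -1, 1, 1, 1], ![1, 1, 1]),
   (![0, -1, -1, -1, 1, 1], ![1, 1, 1]),
   (![-1, -1, 0, 1, 1, 1], ![1, 1, 1]),
   (![1, 1, 0, 1, 1, 1], ![1, 1, 1]),
   (![1, 1, 0, 1, 1, -1], ![1, 1, 1]),
   (![1, 0, -1, 1, 1, 1], ![1, 1, 1]),
   (![-1, 0, 1, 1, 1, 1], ![1, 1, 1]),
   (![-1, 0, 1, 1, -1, 1], ![1, 1, 1]),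
   (![-1, -1, -1, 0, 1, 1], ![1, 1, 1]),
   (![1, -1, -1, 0, 1, 1], ![1, 1, 1]),
   (![1, 1, -1, 1, 1, 0], ![1, 1, 1]),
   (![1, 1, 1, 1, 1, 0], ![1, 1, 1]),
   (![-1, 1, 1, 1, 0, 1], ![1, 1, 1]),
   (![-1, -1, 1, 1, 0, 1], ![1, 1, 1])]

def L1 : List Pat :=
  [(![1, 1, 0, 1, 1, -1], ![1, 0, 0]),
   (![-1, 0, 1, 1, -1, 1], ![0, 1, 0]),
   (![0, -1, -1, -1, 1, 1], ![0, 0, 1]),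
   (![0, 0, 0, 1, 1, 1], ![1, 1, 1]),
   (![0, 1, 1, 1, 0, 0], ![1, 1, 0]),
   (![1, 0, -1, 0, 1, 0], ![1, 0, 1]),
   (![-1, -1, 0, 0, 0, 1], ![0, 1, 1]),
   (![0, -1, -1, 0, 1, 1], ![1, 1, 1]),
   (![-1, 0, 1, 1, 0, 1], ![1, 1, 1]),
   (![1, 1, 0, 1, 1, 0], ![1, 1, 1])]

def allP : List Pat := L3 ++ L2 ++ L1


/-! ### Classification -/

set_option maxHeartbeats 4000000 in
lemma classify (a b c : ℚ) (h0 : 0 ≤ a) (h1 : 0 ≤ b) (h2 : 0 ≤ c)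
    (hs : 0 < a + b + c) :
    ((![sgn (a - b), sgn (a - c), sgn (b - c), sgn (a + b - c),
       sgn (a + c - b), sgn (b + c - a)], ![sgn a, sgn b, sgn c]) : Pat) ∈ allP := by
  rcases sgn_tri (a - b) with ⟨e1,f1⟩|⟨e1,f1⟩|⟨e1,f1⟩ <;>
  rcases sgn_tri (a - c) with ⟨e2,f2⟩|⟨e2,f2⟩|⟨e2,f2⟩ <;>
  rcases sgn_tri (b - c) with ⟨e3,f3⟩|⟨e3,f3⟩|⟨e3,f3⟩ <;>
  first
  | linarith
  | (rcases sgn_tri (a + b - c) with ⟨e4,f4⟩|⟨e4,f4⟩|⟨e4,f4⟩ <;>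
     rcases sgn_tri (a + c - b) with ⟨e5,f5⟩|⟨e5,f5⟩|⟨e5,f5⟩ <;>
     rcases sgn_tri (b + c - a) with ⟨e6,f6⟩|⟨e6,f6⟩|⟨e6,f6⟩ <;>
     first
     | linarith
     | (rcases sgn_dich h0 with ⟨e7,f7⟩|⟨e7,f7⟩ <;>
        rcases sgn_dich h1 with ⟨e8,f8⟩|⟨e8,f8⟩ <;>
        rcases sgn_dich h2 with ⟨e9,f9⟩|⟨e9,f9⟩ <;>
        first
        | linarith
        | (rw [e1,e2,e3,e4,e5,e6,e7,e8,e9]; decide)))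

lemma classify' (x : Fin 3 → ℚ) (h : ∀ i, 0 ≤ x i) (hx : x ≠ 0) : pattern x ∈ allP := by
  have hs : 0 < x 0 + x 1 + x 2 := by
    obtain ⟨i, hi⟩ := Function.ne_iff.mp hx
    have h0 := h 0; have h1 := h 1; have h2 := h 2
    fin_cases i <;>
      [have : 0 < x 0 := lt_of_le_of_ne h0 (Ne.symm hi);
       have : 0 < x 1 := lt_of_le_of_ne h1 (Ne.symm hi);
       have : 0 < x 2 := lt_of_le_of_ne h2 (Ne.symm hi)] <;>
    linarith
  rw [pattern_eq]
  exact classify (x 0) (x 1) (x 2) (h 0) (h 1) (h 2) hs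

/-! ### Properties of the listed patterns -/

attribute [local simp] Matrix.cons_val_two

lemma L3_prop : ∀ p ∈ L3, (cell p).Nonempty ∧ dimOf (cell p) = 3 := by
  intro p hp
  fin_cases hp
  · have m1 : (![4, 3, 2] : Fin 3 → ℚ) ∈ cell ((![1, 1, 1, 1, 1, 1], ![1, 1, 1]) : Pat) :=
      mem_cell_of ![4, 3, 2] (![1, 1, 1, 1, 1, 1], ![1, 1, 1]) (by norm_num) (by norm_num) (by norm_num) (by norm_num) (by norm_num [sgn])
    have m2 : (![4, 3, (15/7 : ℚ)] : Fin 3 → ℚ) ∈ cell ((![1, 1, 1, 1, 1, 1], ![1, 1, 1]) : Pat) :=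
      mem_cell_of ![4, 3, (15/7 : ℚ)] (![1, 1, 1, 1, 1, 1], ![1, 1, 1]) (by norm_num) (by norm_num) (by norm_num) (by norm_num) (by norm_num [sgn])
    have m3 : (![4, (22/7 : ℚ), 2] : Fin 3 → ℚ) ∈ cell ((![1, 1, 1, 1, 1, 1], ![1, 1, 1]) : Pat) :=
      mem_cell_of ![4, (22/7 : ℚ), 2] (![1, 1, 1, 1, 1, 1], ![1, 1, 1]) (by norm_num) (by norm_num) (by norm_num) (by norm_num) (by norm_num [sgn])
    exact ⟨⟨_, m1⟩, dim_eq_3 m1 m2 m3 (by norm_num)⟩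
  · have m1 : (![3, 4, 2] : Fin 3 → ℚ) ∈ cell ((![-1, 1, 1, 1, 1, 1], ![1, 1, 1]) : Pat) :=
      mem_cell_of ![3, 4, 2] (![-1, 1, 1, 1, 1, 1], ![1, 1, 1]) (by norm_num) (by norm_num) (by norm_num) (by norm_num) (by norm_num [sgn])
    have m2 : (![3, 4, (15/7 : ℚ)] : Fin 3 → ℚ) ∈ cell ((![-1, 1, 1, 1, 1, 1], ![1, 1, 1]) : Pat) :=
      mem_cell_of ![3, 4, (15/7 : ℚ)] (![-1, 1, 1, 1, 1, 1], ![1, 1, 1]) (by norm_num) (by norm_num) (by norm_num) (by norm_num) (by norm_num [sgn])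
    have m3 : (![3, (29/7 : ℚ), 2] : Fin 3 → ℚ) ∈ cell ((![-1, 1, 1, 1, 1, 1], ![1, 1, 1]) : Pat) :=
      mem_cell_of ![3, (29/7 : ℚ), 2] (![-1, 1, 1, 1, 1, 1], ![1, 1, 1]) (by norm_num) (by norm_num) (by norm_num) (by norm_num) (by norm_num [sgn])
    exact ⟨⟨_, m1⟩, dim_eq_3 m1 m2 m3 (by norm_num)⟩
  · have m1 : (![2, 3, 4] : Fin 3 → ℚ) ∈ cell ((![-1, -1, -1, 1, 1, 1], ![1, 1, 1]) : Pat) :=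
      mem_cell_of ![2, 3, 4] (![-1, -1, -1, 1, 1, 1], ![1, 1, 1]) (by norm_num) (by norm_num) (by norm_num) (by norm_num) (by norm_num [sgn])
    have m2 : (![2, 3, (29/7 : ℚ)] : Fin 3 → ℚ) ∈ cell ((![-1, -1, -1, 1, 1, 1], ![1, 1, 1]) : Pat) :=
      mem_cell_of ![2, 3, (29/7 : ℚ)] (![-1, -1, -1, 1, 1, 1], ![1, 1, 1]) (by norm_num) (by norm_num) (by norm_num) (by norm_num) (by norm_num [sgn])
    have m3 : (![2, (22/7 : ℚ), 4] : Fin 3 → ℚ) ∈ cell ((![-1, -1, -1, 1, 1, 1], ![1, 1, 1]) : Pat) :=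
      mem_cell_of ![2, (22/7 : ℚ), 4] (![-1, -1, -1, 1, 1, 1], ![1, 1, 1]) (by norm_num) (by norm_num) (by norm_num) (by norm_num) (by norm_num [sgn])
    exact ⟨⟨_, m1⟩, dim_eq_3 m1 m2 m3 (by norm_num)⟩
  · have m1 : (![3, 2, 4] : Fin 3 → ℚ) ∈ cell ((![1, -1, -1, 1, 1, 1], ![1, 1, 1]) : Pat) :=
      mem_cell_of ![3, 2, 4] (![1, -1, -1, 1, 1, 1], ![1, 1, 1]) (by norm_num) (by norm_num) (by norm_num) (by norm_num) (by norm_num [sgn])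
    have m2 : (![3, 2, (29/7 : ℚ)] : Fin 3 → ℚ) ∈ cell ((![1, -1, -1, 1, 1, 1], ![1, 1, 1]) : Pat) :=
      mem_cell_of ![3, 2, (29/7 : ℚ)] (![1, -1, -1, 1, 1, 1], ![1, 1, 1]) (by norm_num) (by norm_num) (by norm_num) (by norm_num) (by norm_num [sgn])
    have m3 : (![3, (15/7 : ℚ), 4] : Fin 3 → ℚ) ∈ cell ((![1, -1, -1, 1, 1, 1], ![1, 1, 1]) : Pat) :=
      mem_cell_of ![3, (15/7 : ℚ), 4] (![1, -1, -1, 1, 1, 1], ![1, 1, 1]) (by norm_num) (by norm_num) (by norm_num) (by norm_num) (by norm_num [sgn])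
    exact ⟨⟨_, m1⟩, dim_eq_3 m1 m2 m3 (by norm_num)⟩
  · have m1 : (![2, 4, 3] : Fin 3 → ℚ) ∈ cell ((![-1, -1, 1, 1, 1, 1], ![1, 1, 1]) : Pat) :=
      mem_cell_of ![2, 4, 3] (![-1, -1, 1, 1, 1, 1], ![1, 1, 1]) (by norm_num) (by norm_num) (by norm_num) (by norm_num) (by norm_num [sgn])
    have m2 : (![2, 4, (22/7 : ℚ)] : Fin 3 → ℚ) ∈ cell ((![-1, -1, 1, 1, 1, 1], ![1, 1, 1]) : Pat) :=
      mem_cell_of ![2, 4, (22/7 : ℚ)] (![-1, -1, 1, 1, 1, 1], ![1, 1, 1]) (by norm_num) (by norm_num) (by norm_num) (by norm_num) (by norm_num [sgn])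
    have m3 : (![2, (29/7 : ℚ), 3] : Fin 3 → ℚ) ∈ cell ((![-1, -1, 1, 1, 1, 1], ![1, 1, 1]) : Pat) :=
      mem_cell_of ![2, (29/7 : ℚ), 3] (![-1, -1, 1, 1, 1, 1], ![1, 1, 1]) (by norm_num) (by norm_num) (by norm_num) (by norm_num) (by norm_num [sgn])
    exact ⟨⟨_, m1⟩, dim_eq_3 m1 m2 m3 (by norm_num)⟩
  · have m1 : (![4, 2, 3] : Fin 3 → ℚ) ∈ cell ((![1, 1, -1, 1, 1, 1], ![1, 1, 1]) : Pat) :=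
      mem_cell_of ![4, 2, 3] (![1, 1, -1, 1, 1, 1], ![1, 1, 1]) (by norm_num) (by norm_num) (by norm_num) (by norm_num) (by norm_num [sgn])
    have m2 : (![4, 2, (22/7 : ℚ)] : Fin 3 → ℚ) ∈ cell ((![1, 1, -1, 1, 1, 1], ![1, 1, 1]) : Pat) :=
      mem_cell_of ![4, 2, (22/7 : ℚ)] (![1, 1, -1, 1, 1, 1], ![1, 1, 1]) (by norm_num) (by norm_num) (by norm_num) (by norm_num) (by norm_num [sgn])
    have m3 : (![4, (15/7 : ℚ), 3] : Fin 3 → ℚ) ∈ cell ((![1, 1, -1, 1, 1, 1], ![1, 1, 1]) : Pat) :=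
      mem_cell_of ![4, (15/7 : ℚ), 3] (![1, 1, -1, 1, 1, 1], ![1, 1, 1]) (by norm_num) (by norm_num) (by norm_num) (by norm_num) (by norm_num [sgn])
    exact ⟨⟨_, m1⟩, dim_eq_3 m1 m2 m3 (by norm_num)⟩
  · have m1 : (![2, 4, 1] : Fin 3 → ℚ) ∈ cell ((![-1, 1, 1, 1, -1, 1], ![1, 1, 1]) : Pat) :=
      mem_cell_of ![2, 4, 1] (![-1, 1, 1, 1, -1, 1], ![1, 1, 1]) (by norm_num) (by norm_num) (by norm_num) (by norm_num) (by norm_num [sgn])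
    have m2 : (![2, 4, (8/7 : ℚ)] : Fin 3 → ℚ) ∈ cell ((![-1, 1, 1, 1, -1, 1], ![1, 1, 1]) : Pat) :=
      mem_cell_of ![2, 4, (8/7 : ℚ)] (![-1, 1, 1, 1, -1, 1], ![1, 1, 1]) (by norm_num) (by norm_num) (by norm_num) (by norm_num) (by norm_num [sgn])
    have m3 : (![2, (29/7 : ℚ), 1] : Fin 3 → ℚ) ∈ cell ((![-1, 1, 1, 1, -1, 1], ![1, 1, 1]) : Pat) :=
      mem_cell_of ![2, (29/7 : ℚ), 1] (![-1, 1, 1, 1, -1, 1], ![1, 1, 1]) (by norm_num) (by norm_num) (by norm_num) (by norm_num) (by norm_num [sgn])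
    exact ⟨⟨_, m1⟩, dim_eq_3 m1 m2 m3 (by norm_num)⟩
  · have m1 : (![4, 2, 1] : Fin 3 → ℚ) ∈ cell ((![1, 1, 1, 1, 1, -1], ![1, 1, 1]) : Pat) :=
      mem_cell_of ![4, 2, 1] (![1, 1, 1, 1, 1, -1], ![1, 1, 1]) (by norm_num) (by norm_num) (by norm_num) (by norm_num) (by norm_num [sgn])
    have m2 : (![4, 2, (8/7 : ℚ)] : Fin 3 → ℚ) ∈ cell ((![1, 1, 1, 1, 1, -1], ![1, 1, 1]) : Pat) :=
      mem_cell_of ![4, 2, (8/7 : ℚ)] (![1, 1, 1, 1, 1, -1], ![1, 1, 1]) (by norm_num) (by norm_num) (by norm_num) (by norm_num) (by norm_num [sgn])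
    have m3 : (![4, (15/7 : ℚ), 1] : Fin 3 → ℚ) ∈ cell ((![1, 1, 1, 1, 1, -1], ![1, 1, 1]) : Pat) :=
      mem_cell_of ![4, (15/7 : ℚ), 1] (![1, 1, 1, 1, 1, -1], ![1, 1, 1]) (by norm_num) (by norm_num) (by norm_num) (by norm_num) (by norm_num [sgn])
    exact ⟨⟨_, m1⟩, dim_eq_3 m1 m2 m3 (by norm_num)⟩
  · have m1 : (![1, 4, 2] : Fin 3 → ℚ) ∈ cell ((![-1, -1, 1, 1, -1, 1], ![1, 1, 1]) : Pat) :=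
      mem_cell_of ![1, 4, 2] (![-1, -1, 1, 1, -1, 1], ![1, 1, 1]) (by norm_num) (by norm_num) (by norm_num) (by norm_num) (by norm_num [sgn])
    have m2 : (![1, 4, (15/7 : ℚ)] : Fin 3 → ℚ) ∈ cell ((![-1, -1, 1, 1, -1, 1], ![1, 1, 1]) : Pat) :=
      mem_cell_of ![1, 4, (15/7 : ℚ)] (![-1, -1, 1, 1, -1, 1], ![1, 1, 1]) (by norm_num) (by norm_num) (by norm_num) (by norm_num) (by norm_num [sgn])
    have m3 : (![1, (29/7 : ℚ), 2] : Fin 3 → ℚ) ∈ cell ((![-1, -1, 1, 1, -1, 1], ![1, 1, 1]) : Pat) :=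
      mem_cell_of ![1, (29/7 : ℚ), 2] (![-1, -1, 1, 1, -1, 1], ![1, 1, 1]) (by norm_num) (by norm_num) (by norm_num) (by norm_num) (by norm_num [sgn])
    exact ⟨⟨_, m1⟩, dim_eq_3 m1 m2 m3 (by norm_num)⟩
  · have m1 : (![4, 1, 2] : Fin 3 → ℚ) ∈ cell ((![1, 1, -1, 1, 1, -1], ![1, 1, 1]) : Pat) :=
      mem_cell_of ![4, 1, 2] (![1, 1, -1, 1, 1, -1], ![1, 1, 1]) (by norm_num) (by norm_num) (by norm_num) (by norm_num) (by norm_num [sgn])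
    have m2 : (![4, 1, (15/7 : ℚ)] : Fin 3 → ℚ) ∈ cell ((![1, 1, -1, 1, 1, -1], ![1, 1, 1]) : Pat) :=
      mem_cell_of ![4, 1, (15/7 : ℚ)] (![1, 1, -1, 1, 1, -1], ![1, 1, 1]) (by norm_num) (by norm_num) (by norm_num) (by norm_num) (by norm_num [sgn])
    have m3 : (![4, (8/7 : ℚ), 2] : Fin 3 → ℚ) ∈ cell ((![1, 1, -1, 1, 1, -1], ![1, 1, 1]) : Pat) :=
      mem_cell_of ![4, (8/7 : ℚ), 2] (![1, 1, -1, 1, 1, -1], ![1, 1, 1]) (by norm_num) (by norm_num) (by norm_num) (by norm_num) (by norm_num [sgn])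
    exact ⟨⟨_, m1⟩, dim_eq_3 m1 m2 m3 (by norm_num)⟩
  · have m1 : (![2, 1, 4] : Fin 3 → ℚ) ∈ cell ((![1, -1, -1, -1, 1, 1], ![1, 1, 1]) : Pat) :=
      mem_cell_of ![2, 1, 4] (![1, -1, -1, -1, 1, 1], ![1, 1, 1]) (by norm_num) (by norm_num) (by norm_num) (by norm_num) (by norm_num [sgn])
    have m2 : (![2, 1, (29/7 : ℚ)] : Fin 3 → ℚ) ∈ cell ((![1, -1, -1, -1, 1, 1], ![1, 1, 1]) : Pat) :=
      mem_cell_of ![2, 1, (29/7 : ℚ)] (![1, -1, -1, -1, 1, 1], ![1, 1, 1]) (by norm_num) (by norm_num) (by norm_num) (by norm_num) (by norm_num [sgn])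
    have m3 : (![2, (8/7 : ℚ), 4] : Fin 3 → ℚ) ∈ cell ((![1, -1, -1, -1, 1, 1], ![1, 1, 1]) : Pat) :=
      mem_cell_of ![2, (8/7 : ℚ), 4] (![1, -1, -1, -1, 1, 1], ![1, 1, 1]) (by norm_num) (by norm_num) (by norm_num) (by norm_num) (by norm_num [sgn])
    exact ⟨⟨_, m1⟩, dim_eq_3 m1 m2 m3 (by norm_num)⟩
  · have m1 : (![1, 2, 4] : Fin 3 → ℚ) ∈ cell ((![-1, -1, -1, -1, 1, 1], ![1, 1, 1]) : Pat) :=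
      mem_cell_of ![1, 2, 4] (![-1, -1, -1, -1, 1, 1], ![1, 1, 1]) (by norm_num) (by norm_num) (by norm_num) (by norm_num) (by norm_num [sgn])
    have m2 : (![1, 2, (29/7 : ℚ)] : Fin 3 → ℚ) ∈ cell ((![-1, -1, -1, -1, 1, 1], ![1, 1, 1]) : Pat) :=
      mem_cell_of ![1, 2, (29/7 : ℚ)] (![-1, -1, -1, -1, 1, 1], ![1, 1, 1]) (by norm_num) (by norm_num) (by norm_num) (by norm_num) (by norm_num [sgn])
    have m3 : (![1, (15/7 : ℚ), 4] : Fin 3 → ℚ) ∈ cell ((![-1, -1, -1, -1, 1, 1], ![1, 1, 1]) : Pat) :=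
      mem_cell_of ![1, (15/7 : ℚ), 4] (![-1, -1, -1, -1, 1, 1], ![1, 1, 1]) (by norm_num) (by norm_num) (by norm_num) (by norm_num) (by norm_num [sgn])
    exact ⟨⟨_, m1⟩, dim_eq_3 m1 m2 m3 (by norm_num)⟩

lemma L2_prop : ∀ p ∈ L2, (cell p).Nonempty ∧ dimOf (cell p) = 2 := by
  intro p hp
  fin_cases hp
  · have m1 : (![2, 1, 0] : Fin 3 → ℚ) ∈ cell ((![1, 1, 1, 1, 1, -1], ![1, 1, 0]) : Pat) :=
      mem_cell_of ![2, 1, 0] (![1, 1, 1, 1, 1, -1], ![1, 1, 0]) (by norm_num) (by norm_num) (by norm_num) (by norm_num) (by norm_num [sgn])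
    have m2 : (![3, 1, 0] : Fin 3 → ℚ) ∈ cell ((![1, 1, 1, 1, 1, -1], ![1, 1, 0]) : Pat) :=
      mem_cell_of ![3, 1, 0] (![1, 1, 1, 1, 1, -1], ![1, 1, 0]) (by norm_num) (by norm_num) (by norm_num) (by norm_num) (by norm_num [sgn])
    refine ⟨⟨_, m1⟩, dim_eq_2 (c := ![0, 0, 1]) ![0, 0, 1] (by norm_num [lmap]) m1 m2 0 1 (by norm_num) ?_⟩
    intro x hx
    have hA : x 2 = 0 := sgn_eq_zero (pat2 hx.2.2 2)
    show (0 : ℚ) * x 0 + (0 : ℚ) * x 1 + (1 : ℚ) * x 2 = 0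
    linarith
  · have m1 : (![1, 2, 0] : Fin 3 → ℚ) ∈ cell ((![-1, 1, 1, 1, -1, 1], ![1, 1, 0]) : Pat) :=
      mem_cell_of ![1, 2, 0] (![-1, 1, 1, 1, -1, 1], ![1, 1, 0]) (by norm_num) (by norm_num) (by norm_num) (by norm_num) (by norm_num [sgn])
    have m2 : (![1, 3, 0] : Fin 3 → ℚ) ∈ cell ((![-1, 1, 1, 1, -1, 1], ![1, 1, 0]) : Pat) :=
      mem_cell_of ![1, 3, 0] (![-1, 1, 1, 1, -1, 1], ![1, 1, 0]) (by norm_num) (by norm_num) (by norm_num) (by norm_num) (by norm_num [sgn])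
    refine ⟨⟨_, m1⟩, dim_eq_2 (c := ![0, 0, 1]) ![0, 0, 1] (by norm_num [lmap]) m1 m2 0 1 (by norm_num) ?_⟩
    intro x hx
    have hA : x 2 = 0 := sgn_eq_zero (pat2 hx.2.2 2)
    show (0 : ℚ) * x 0 + (0 : ℚ) * x 1 + (1 : ℚ) * x 2 = 0
    linarith
  · have m1 : (![0, 2, 1] : Fin 3 → ℚ) ∈ cell ((![-1, -1, 1, 1, -1, 1], ![0, 1, 1]) : Pat) :=
      mem_cell_of ![0, 2, 1] (![-1, -1, 1, 1, -1, 1], ![0, 1, 1]) (by norm_num) (by norm_num) (by norm_num) (by norm_num) (by norm_num [sgn])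
    have m2 : (![0, 3, 1] : Fin 3 → ℚ) ∈ cell ((![-1, -1, 1, 1, -1, 1], ![0, 1, 1]) : Pat) :=
      mem_cell_of ![0, 3, 1] (![-1, -1, 1, 1, -1, 1], ![0, 1, 1]) (by norm_num) (by norm_num) (by norm_num) (by norm_num) (by norm_num [sgn])
    refine ⟨⟨_, m1⟩, dim_eq_2 (c := ![1, 0, 0]) ![1, 0, 0] (by norm_num [lmap]) m1 m2 1 2 (by norm_num) ?_⟩
    intro x hx
    have hA : x 0 = 0 := sgn_eq_zero (pat2 hx.2.2 0)
    show (1 : ℚ) * x 0 + (0 : ℚ) * x 1 + (0 : ℚ) * x 2 = 0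
    linarith
  · have m1 : (![0, 1, 2] : Fin 3 → ℚ) ∈ cell ((![-1, -1, -1, -1, 1, 1], ![0, 1, 1]) : Pat) :=
      mem_cell_of ![0, 1, 2] (![-1, -1, -1, -1, 1, 1], ![0, 1, 1]) (by norm_num) (by norm_num) (by norm_num) (by norm_num) (by norm_num [sgn])
    have m2 : (![0, 1, 3] : Fin 3 → ℚ) ∈ cell ((![-1, -1, -1, -1, 1, 1], ![0, 1, 1]) : Pat) :=
      mem_cell_of ![0, 1, 3] (![-1, -1, -1, -1, 1, 1], ![0, 1, 1]) (by norm_num) (by norm_num) (by norm_num) (by norm_num) (by norm_num [sgn])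
    refine ⟨⟨_, m1⟩, dim_eq_2 (c := ![1, 0, 0]) ![1, 0, 0] (by norm_num [lmap]) m1 m2 1 2 (by norm_num) ?_⟩
    intro x hx
    have hA : x 0 = 0 := sgn_eq_zero (pat2 hx.2.2 0)
    show (1 : ℚ) * x 0 + (0 : ℚ) * x 1 + (0 : ℚ) * x 2 = 0
    linarith
  · have m1 : (![1, 0, 2] : Fin 3 → ℚ) ∈ cell ((![1, -1, -1, -1, 1, 1], ![1, 0, 1]) : Pat) :=
      mem_cell_of ![1, 0, 2] (![1, -1, -1, -1, 1, 1], ![1, 0, 1]) (by norm_num) (by norm_num) (by norm_num) (by norm_num) (by norm_num [sgn])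
    have m2 : (![1, 0, 3] : Fin 3 → ℚ) ∈ cell ((![1, -1, -1, -1, 1, 1], ![1, 0, 1]) : Pat) :=
      mem_cell_of ![1, 0, 3] (![1, -1, -1, -1, 1, 1], ![1, 0, 1]) (by norm_num) (by norm_num) (by norm_num) (by norm_num) (by norm_num [sgn])
    refine ⟨⟨_, m1⟩, dim_eq_2 (c := ![0, 1, 0]) ![0, 1, 0] (by norm_num [lmap]) m1 m2 0 2 (by norm_num) ?_⟩
    intro x hx
    have hA : x 1 = 0 := sgn_eq_zero (pat2 hx.2.2 1)
    show (0 : ℚ) * x 0 + (1 : ℚ) * x 1 + (0 : ℚ) * x 2 = 0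
    linarith
  · have m1 : (![2, 0, 1] : Fin 3 → ℚ) ∈ cell ((![1, 1, -1, 1, 1, -1], ![1, 0, 1]) : Pat) :=
      mem_cell_of ![2, 0, 1] (![1, 1, -1, 1, 1, -1], ![1, 0, 1]) (by norm_num) (by norm_num) (by norm_num) (by norm_num) (by norm_num [sgn])
    have m2 : (![3, 0, 1] : Fin 3 → ℚ) ∈ cell ((![1, 1, -1, 1, 1, -1], ![1, 0, 1]) : Pat) :=
      mem_cell_of ![3, 0, 1] (![1, 1, -1, 1, 1, -1], ![1, 0, 1]) (by norm_num) (by norm_num) (by norm_num) (by norm_num) (by norm_num [sgn])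
    refine ⟨⟨_, m1⟩, dim_eq_2 (c := ![0, 1, 0]) ![0, 1, 0] (by norm_num [lmap]) m1 m2 0 2 (by norm_num) ?_⟩
    intro x hx
    have hA : x 1 = 0 := sgn_eq_zero (pat2 hx.2.2 1)
    show (0 : ℚ) * x 0 + (1 : ℚ) * x 1 + (0 : ℚ) * x 2 = 0
    linarith
  · have m1 : (![2, 2, 1] : Fin 3 → ℚ) ∈ cell ((![0, 1, 1, 1, 1, 1], ![1, 1, 1]) : Pat) :=
      mem_cell_of ![2, 2, 1] (![0, 1, 1, 1, 1, 1], ![1, 1, 1]) (by norm_num) (by norm_num) (by norm_num) (by norm_num) (by norm_num [sgn])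
    have m2 : (![3, 3, 1] : Fin 3 → ℚ) ∈ cell ((![0, 1, 1, 1, 1, 1], ![1, 1, 1]) : Pat) :=
      mem_cell_of ![3, 3, 1] (![0, 1, 1, 1, 1, 1], ![1, 1, 1]) (by norm_num) (by norm_num) (by norm_num) (by norm_num) (by norm_num [sgn])
    refine ⟨⟨_, m1⟩, dim_eq_2 (c := ![1, -1, 0]) ![1, -1, 0] (by norm_num [lmap]) m1 m2 0 2 (by norm_num) ?_⟩
    intro x hx
    have hA : x 0 - x 1 = 0 := sgn_eq_zero (pat1 hx.2.2 0)
    show (1 : ℚ) * x 0 + (-1 : ℚ) * x 1 + (0 : ℚ) * x 2 = 0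
    linarith
  · have m1 : (![2, 2, 3] : Fin 3 → ℚ) ∈ cell ((![0, -1, -1, 1, 1, 1], ![1, 1, 1]) : Pat) :=
      mem_cell_of ![2, 2, 3] (![0, -1, -1, 1, 1, 1], ![1, 1, 1]) (by norm_num) (by norm_num) (by norm_num) (by norm_num) (by norm_num [sgn])
    have m2 : (![4, 4, 5] : Fin 3 → ℚ) ∈ cell ((![0, -1, -1, 1, 1, 1], ![1, 1, 1]) : Pat) :=
      mem_cell_of ![4, 4, 5] (![0, -1, -1, 1, 1, 1], ![1, 1, 1]) (by norm_num) (by norm_num) (by norm_num) (by norm_num) (by norm_num [sgn])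
    refine ⟨⟨_, m1⟩, dim_eq_2 (c := ![1, -1, 0]) ![1, -1, 0] (by norm_num [lmap]) m1 m2 0 2 (by norm_num) ?_⟩
    intro x hx
    have hA : x 0 - x 1 = 0 := sgn_eq_zero (pat1 hx.2.2 0)
    show (1 : ℚ) * x 0 + (-1 : ℚ) * x 1 + (0 : ℚ) * x 2 = 0
    linarith
  · have m1 : (![1, 1, 3] : Fin 3 → ℚ) ∈ cell ((![0, -1, -1, -1, 1, 1], ![1, 1, 1]) : Pat) :=
      mem_cell_of ![1, 1, 3] (![0, -1, -1, -1, 1, 1], ![1, 1, 1]) (by norm_num) (by norm_num) (by norm_num) (by norm_num) (by norm_num [sgn])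
    have m2 : (![1, 1, 4] : Fin 3 → ℚ) ∈ cell ((![0, -1, -1, -1, 1, 1], ![1, 1, 1]) : Pat) :=
      mem_cell_of ![1, 1, 4] (![0, -1, -1, -1, 1, 1], ![1, 1, 1]) (by norm_num) (by norm_num) (by norm_num) (by norm_num) (by norm_num [sgn])
    refine ⟨⟨_, m1⟩, dim_eq_2 (c := ![1, -1, 0]) ![1, -1, 0] (by norm_num [lmap]) m1 m2 0 2 (by norm_num) ?_⟩
    intro x hx
    have hA : x 0 - x 1 = 0 := sgn_eq_zero (pat1 hx.2.2 0)
    show (1 : ℚ) * x 0 + (-1 : ℚ) * x 1 + (0 : ℚ) * x 2 = 0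
    linarith
  · have m1 : (![1, 2, 2] : Fin 3 → ℚ) ∈ cell ((![-1, -1, 0, 1, 1, 1], ![1, 1, 1]) : Pat) :=
      mem_cell_of ![1, 2, 2] (![-1, -1, 0, 1, 1, 1], ![1, 1, 1]) (by norm_num) (by norm_num) (by norm_num) (by norm_num) (by norm_num [sgn])
    have m2 : (![1, 3, 3] : Fin 3 → ℚ) ∈ cell ((![-1, -1, 0, 1, 1, 1], ![1, 1, 1]) : Pat) :=
      mem_cell_of ![1, 3, 3] (![-1, -1, 0, 1, 1, 1], ![1, 1, 1]) (by norm_num) (by norm_num) (by norm_num) (by norm_num) (by norm_num [sgn])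
    refine ⟨⟨_, m1⟩, dim_eq_2 (c := ![0, 1, -1]) ![0, 1, -1] (by norm_num [lmap]) m1 m2 0 1 (by norm_num) ?_⟩
    intro x hx
    have hA : x 1 - x 2 = 0 := sgn_eq_zero (pat1 hx.2.2 2)
    show (0 : ℚ) * x 0 + (1 : ℚ) * x 1 + (-1 : ℚ) * x 2 = 0
    linarith
  · have m1 : (![3, 2, 2] : Fin 3 → ℚ) ∈ cell ((![1, 1, 0, 1, 1, 1], ![1, 1, 1]) : Pat) :=
      mem_cell_of ![3, 2, 2] (![1, 1, 0, 1, 1, 1], ![1, 1, 1]) (by norm_num) (by norm_num) (by norm_num) (by norm_num) (by norm_num [sgn])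
    have m2 : (![5, 4, 4] : Fin 3 → ℚ) ∈ cell ((![1, 1, 0, 1, 1, 1], ![1, 1, 1]) : Pat) :=
      mem_cell_of ![5, 4, 4] (![1, 1, 0, 1, 1, 1], ![1, 1, 1]) (by norm_num) (by norm_num) (by norm_num) (by norm_num) (by norm_num [sgn])
    refine ⟨⟨_, m1⟩, dim_eq_2 (c := ![0, 1, -1]) ![0, 1, -1] (by norm_num [lmap]) m1 m2 0 1 (by norm_num) ?_⟩
    intro x hx
    have hA : x 1 - x 2 = 0 := sgn_eq_zero (pat1 hx.2.2 2)
    show (0 : ℚ) * x 0 + (1 : ℚ) * x 1 + (-1 : ℚ) * x 2 = 0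
    linarith
  · have m1 : (![3, 1, 1] : Fin 3 → ℚ) ∈ cell ((![1, 1, 0, 1, 1, -1], ![1, 1, 1]) : Pat) :=
      mem_cell_of ![3, 1, 1] (![1, 1, 0, 1, 1, -1], ![1, 1, 1]) (by norm_num) (by norm_num) (by norm_num) (by norm_num) (by norm_num [sgn])
    have m2 : (![4, 1, 1] : Fin 3 → ℚ) ∈ cell ((![1, 1, 0, 1, 1, -1], ![1, 1, 1]) : Pat) :=
      mem_cell_of ![4, 1, 1] (![1, 1, 0, 1, 1, -1], ![1, 1, 1]) (by norm_num) (by norm_num) (by norm_num) (by norm_num) (by norm_num [sgn])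
    refine ⟨⟨_, m1⟩, dim_eq_2 (c := ![0, 1, -1]) ![0, 1, -1] (by norm_num [lmap]) m1 m2 0 1 (by norm_num) ?_⟩
    intro x hx
    have hA : x 1 - x 2 = 0 := sgn_eq_zero (pat1 hx.2.2 2)
    show (0 : ℚ) * x 0 + (1 : ℚ) * x 1 + (-1 : ℚ) * x 2 = 0
    linarith
  · have m1 : (![2, 1, 2] : Fin 3 → ℚ) ∈ cell ((![1, 0, -1, 1, 1, 1], ![1, 1, 1]) : Pat) :=
      mem_cell_of ![2, 1, 2] (![1, 0, -1, 1, 1, 1], ![1, 1, 1]) (by norm_num) (by norm_num) (by norm_num) (by norm_num) (by norm_num [sgn])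
    have m2 : (![3, 1, 3] : Fin 3 → ℚ) ∈ cell ((![1, 0, -1, 1, 1, 1], ![1, 1, 1]) : Pat) :=
      mem_cell_of ![3, 1, 3] (![1, 0, -1, 1, 1, 1], ![1, 1, 1]) (by norm_num) (by norm_num) (by norm_num) (by norm_num) (by norm_num [sgn])
    refine ⟨⟨_, m1⟩, dim_eq_2 (c := ![-1, 0, 1]) ![-1, 0, 1] (by norm_num [lmap]) m1 m2 0 1 (by norm_num) ?_⟩
    intro x hx
    have hA : x 0 - x 2 = 0 := sgn_eq_zero (pat1 hx.2.2 1)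
    show (-1 : ℚ) * x 0 + (0 : ℚ) * x 1 + (1 : ℚ) * x 2 = 0
    linarith
  · have m1 : (![2, 3, 2] : Fin 3 → ℚ) ∈ cell ((![-1, 0, 1, 1, 1, 1], ![1, 1, 1]) : Pat) :=
      mem_cell_of ![2, 3, 2] (![-1, 0, 1, 1, 1, 1], ![1, 1, 1]) (by norm_num) (by norm_num) (by norm_num) (by norm_num) (by norm_num [sgn])
    have m2 : (![4, 5, 4] : Fin 3 → ℚ) ∈ cell ((![-1, 0, 1, 1, 1, 1], ![1, 1, 1]) : Pat) :=
      mem_cell_of ![4, 5, 4] (![-1, 0, 1, 1, 1, 1], ![1, 1, 1]) (by norm_num) (by norm_num) (by norm_num) (by norm_num) (by norm_num [sgn])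
    refine ⟨⟨_, m1⟩, dim_eq_2 (c := ![-1, 0, 1]) ![-1, 0, 1] (by norm_num [lmap]) m1 m2 0 1 (by norm_num) ?_⟩
    intro x hx
    have hA : x 0 - x 2 = 0 := sgn_eq_zero (pat1 hx.2.2 1)
    show (-1 : ℚ) * x 0 + (0 : ℚ) * x 1 + (1 : ℚ) * x 2 = 0
    linarith
  · have m1 : (![1, 3, 1] : Fin 3 → ℚ) ∈ cell ((![-1, 0, 1, 1, -1, 1], ![1, 1, 1]) : Pat) :=
      mem_cell_of ![1, 3, 1] (![-1, 0, 1, 1, -1, 1], ![1, 1, 1]) (by norm_num) (by norm_num) (by norm_num) (by norm_num) (by norm_num [sgn])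
    have m2 : (![1, 4, 1] : Fin 3 → ℚ) ∈ cell ((![-1, 0, 1, 1, -1, 1], ![1, 1, 1]) : Pat) :=
      mem_cell_of ![1, 4, 1] (![-1, 0, 1, 1, -1, 1], ![1, 1, 1]) (by norm_num) (by norm_num) (by norm_num) (by norm_num) (by norm_num [sgn])
    refine ⟨⟨_, m1⟩, dim_eq_2 (c := ![-1, 0, 1]) ![-1, 0, 1] (by norm_num [lmap]) m1 m2 0 1 (by norm_num) ?_⟩
    intro x hx
    have hA : x 0 - x 2 = 0 := sgn_eq_zero (pat1 hx.2.2 1)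
    show (-1 : ℚ) * x 0 + (0 : ℚ) * x 1 + (1 : ℚ) * x 2 = 0
    linarith
  · have m1 : (![1, 2, 3] : Fin 3 → ℚ) ∈ cell ((![-1, -1, -1, 0, 1, 1], ![1, 1, 1]) : Pat) :=
      mem_cell_of ![1, 2, 3] (![-1, -1, -1, 0, 1, 1], ![1, 1, 1]) (by norm_num) (by norm_num) (by norm_num) (by norm_num) (by norm_num [sgn])
    have m2 : (![1, 3, 4] : Fin 3 → ℚ) ∈ cell ((![-1, -1, -1, 0, 1, 1], ![1, 1, 1]) : Pat) :=
      mem_cell_of ![1, 3, 4] (![-1, -1, -1, 0, 1, 1], ![1, 1, 1]) (by norm_num) (by norm_num) (by norm_num) (by norm_num) (by norm_num [sgn])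
    refine ⟨⟨_, m1⟩, dim_eq_2 (c := ![1, 1, -1]) ![1, 1, -1] (by norm_num [lmap]) m1 m2 0 1 (by norm_num) ?_⟩
    intro x hx
    have hA : x 0 + x 1 - x 2 = 0 := sgn_eq_zero (pat1 hx.2.2 3)
    show (1 : ℚ) * x 0 + (1 : ℚ) * x 1 + (-1 : ℚ) * x 2 = 0
    linarith
  · have m1 : (![2, 1, 3] : Fin 3 → ℚ) ∈ cell ((![1, -1, -1, 0, 1, 1], ![1, 1, 1]) : Pat) :=
      mem_cell_of ![2, 1, 3] (![1, -1, -1, 0, 1, 1], ![1, 1, 1]) (by norm_num) (by norm_num) (by norm_num) (by norm_num) (by norm_num [sgn])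
    have m2 : (![3, 1, 4] : Fin 3 → ℚ) ∈ cell ((![1, -1, -1, 0, 1, 1], ![1, 1, 1]) : Pat) :=
      mem_cell_of ![3, 1, 4] (![1, -1, -1, 0, 1, 1], ![1, 1, 1]) (by norm_num) (by norm_num) (by norm_num) (by norm_num) (by norm_num [sgn])
    refine ⟨⟨_, m1⟩, dim_eq_2 (c := ![1, 1, -1]) ![1, 1, -1] (by norm_num [lmap]) m1 m2 0 1 (by norm_num) ?_⟩
    intro x hx
    have hA : x 0 + x 1 - x 2 = 0 := sgn_eq_zero (pat1 hx.2.2 3)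
    show (1 : ℚ) * x 0 + (1 : ℚ) * x 1 + (-1 : ℚ) * x 2 = 0
    linarith
  · have m1 : (![3, 1, 2] : Fin 3 → ℚ) ∈ cell ((![1, 1, -1, 1, 1, 0], ![1, 1, 1]) : Pat) :=
      mem_cell_of ![3, 1, 2] (![1, 1, -1, 1, 1, 0], ![1, 1, 1]) (by norm_num) (by norm_num) (by norm_num) (by norm_num) (by norm_num [sgn])
    have m2 : (![4, 1, 3] : Fin 3 → ℚ) ∈ cell ((![1, 1, -1, 1, 1, 0], ![1, 1, 1]) : Pat) :=
      mem_cell_of ![4, 1, 3] (![1, 1, -1, 1, 1, 0], ![1, 1, 1]) (by norm_num) (by norm_num) (by norm_num) (by norm_num) (by norm_num [sgn])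
    refine ⟨⟨_, m1⟩, dim_eq_2 (c := ![-1, 1, 1]) ![-1, 1, 1] (by norm_num [lmap]) m1 m2 0 1 (by norm_num) ?_⟩
    intro x hx
    have hA : x 1 + x 2 - x 0 = 0 := sgn_eq_zero (pat1 hx.2.2 5)
    show (-1 : ℚ) * x 0 + (1 : ℚ) * x 1 + (1 : ℚ) * x 2 = 0
    linarith
  · have m1 : (![3, 2, 1] : Fin 3 → ℚ) ∈ cell ((![1, 1, 1, 1, 1, 0], ![1, 1, 1]) : Pat) :=
      mem_cell_of ![3, 2, 1] (![1, 1, 1, 1, 1, 0], ![1, 1, 1]) (by norm_num) (by norm_num) (by norm_num) (by norm_num) (by norm_num [sgn])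
    have m2 : (![4, 3, 1] : Fin 3 → ℚ) ∈ cell ((![1, 1, 1, 1, 1, 0], ![1, 1, 1]) : Pat) :=
      mem_cell_of ![4, 3, 1] (![1, 1, 1, 1, 1, 0], ![1, 1, 1]) (by norm_num) (by norm_num) (by norm_num) (by norm_num) (by norm_num [sgn])
    refine ⟨⟨_, m1⟩, dim_eq_2 (c := ![-1, 1, 1]) ![-1, 1, 1] (by norm_num [lmap]) m1 m2 0 1 (by norm_num) ?_⟩
    intro x hx
    have hA : x 1 + x 2 - x 0 = 0 := sgn_eq_zero (pat1 hx.2.2 5)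
    show (-1 : ℚ) * x 0 + (1 : ℚ) * x 1 + (1 : ℚ) * x 2 = 0
    linarith
  · have m1 : (![2, 3, 1] : Fin 3 → ℚ) ∈ cell ((![-1, 1, 1, 1, 0, 1], ![1, 1, 1]) : Pat) :=
      mem_cell_of ![2, 3, 1] (![-1, 1, 1, 1, 0, 1], ![1, 1, 1]) (by norm_num) (by norm_num) (by norm_num) (by norm_num) (by norm_num [sgn])
    have m2 : (![3, 4, 1] : Fin 3 → ℚ) ∈ cell ((![-1, 1, 1, 1, 0, 1], ![1, 1, 1]) : Pat) :=
      mem_cell_of ![3, 4, 1] (![-1, 1, 1, 1, 0, 1], ![1, 1, 1]) (by norm_num) (by norm_num) (by norm_num) (by norm_num) (by norm_num [sgn])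
    refine ⟨⟨_, m1⟩, dim_eq_2 (c := ![1, -1, 1]) ![1, -1, 1] (by norm_num [lmap]) m1 m2 0 1 (by norm_num) ?_⟩
    intro x hx
    have hA : x 0 + x 2 - x 1 = 0 := sgn_eq_zero (pat1 hx.2.2 4)
    show (1 : ℚ) * x 0 + (-1 : ℚ) * x 1 + (1 : ℚ) * x 2 = 0
    linarith
  · have m1 : (![1, 3, 2] : Fin 3 → ℚ) ∈ cell ((![-1, -1, 1, 1, 0, 1], ![1, 1, 1]) : Pat) :=
      mem_cell_of ![1, 3, 2] (![-1, -1, 1, 1, 0, 1], ![1, 1, 1]) (by norm_num) (by norm_num) (by norm_num) (by norm_num) (by norm_num [sgn])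
    have m2 : (![1, 4, 3] : Fin 3 → ℚ) ∈ cell ((![-1, -1, 1, 1, 0, 1], ![1, 1, 1]) : Pat) :=
      mem_cell_of ![1, 4, 3] (![-1, -1, 1, 1, 0, 1], ![1, 1, 1]) (by norm_num) (by norm_num) (by norm_num) (by norm_num) (by norm_num [sgn])
    refine ⟨⟨_, m1⟩, dim_eq_2 (c := ![1, -1, 1]) ![1, -1, 1] (by norm_num [lmap]) m1 m2 0 1 (by norm_num) ?_⟩
    intro x hx
    have hA : x 0 + x 2 - x 1 = 0 := sgn_eq_zero (pat1 hx.2.2 4)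
    show (1 : ℚ) * x 0 + (-1 : ℚ) * x 1 + (1 : ℚ) * x 2 = 0
    linarith

lemma L1_prop : ∀ p ∈ L1, (cell p).Nonempty ∧ dimOf (cell p) = 1 := by
  intro p hp
  fin_cases hp
  · have m1 : (![1, 0, 0] : Fin 3 → ℚ) ∈ cell ((![1, 1, 0, 1, 1, -1], ![1, 0, 0]) : Pat) :=
      mem_cell_of ![1, 0, 0] (![1, 1, 0, 1, 1, -1], ![1, 0, 0]) (by norm_num) (by norm_num) (by norm_num) (by norm_num) (by norm_num [sgn])
    refine ⟨⟨_, m1⟩, dim_eq_1 (v := ![1, 0, 0]) (fun h => by have := congrFun h 0; norm_num at this) m1 ?_⟩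
    intro x hx
    have hA : x 1 = 0 := sgn_eq_zero (pat2 hx.2.2 1)
    have hB : x 2 = 0 := sgn_eq_zero (pat2 hx.2.2 2)
    exact ⟨x 0, vec_ext (by norm_num; try linarith) (by norm_num; try linarith) (by norm_num; try linarith)⟩
  · have m1 : (![0, 1, 0] : Fin 3 → ℚ) ∈ cell ((![-1, 0, 1, 1, -1, 1], ![0, 1, 0]) : Pat) :=
      mem_cell_of ![0, 1, 0] (![-1, 0, 1, 1, -1, 1], ![0, 1, 0]) (by norm_num) (by norm_num) (by norm_num) (by norm_num) (by norm_num [sgn])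
    refine ⟨⟨_, m1⟩, dim_eq_1 (v := ![0, 1, 0]) (fun h => by have := congrFun h 1; norm_num at this) m1 ?_⟩
    intro x hx
    have hA : x 0 = 0 := sgn_eq_zero (pat2 hx.2.2 0)
    have hB : x 2 = 0 := sgn_eq_zero (pat2 hx.2.2 2)
    exact ⟨x 1, vec_ext (by norm_num; try linarith) (by norm_num; try linarith) (by norm_num; try linarith)⟩
  · have m1 : (![0, 0, 1] : Fin 3 → ℚ) ∈ cell ((![0, -1, -1, -1, 1, 1], ![0, 0, 1]) : Pat) :=
      mem_cell_of ![0, 0, 1] (![0, -1, -1, -1, 1, 1], ![0, 0, 1]) (by norm_num) (by norm_num) (by norm_num) (by norm_num) (by norm_num [sgn])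
    refine ⟨⟨_, m1⟩, dim_eq_1 (v := ![0, 0, 1]) (fun h => by have := congrFun h 2; norm_num at this) m1 ?_⟩
    intro x hx
    have hA : x 0 = 0 := sgn_eq_zero (pat2 hx.2.2 0)
    have hB : x 1 = 0 := sgn_eq_zero (pat2 hx.2.2 1)
    exact ⟨x 2, vec_ext (by norm_num; try linarith) (by norm_num; try linarith) (by norm_num; try linarith)⟩
  · have m1 : (![1, 1, 1] : Fin 3 → ℚ) ∈ cell ((![0, 0, 0, 1, 1, 1], ![1, 1, 1]) : Pat) :=
      mem_cell_of ![1, 1, 1] (![0, 0, 0, 1, 1, 1], ![1, 1, 1]) (by norm_num) (by norm_num) (by norm_num) (by norm_num) (by norm_num [sgn])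
    refine ⟨⟨_, m1⟩, dim_eq_1 (v := ![1, 1, 1]) (fun h => by have := congrFun h 0; norm_num at this) m1 ?_⟩
    intro x hx
    have hA : x 0 - x 1 = 0 := sgn_eq_zero (pat1 hx.2.2 0)
    have hB : x 1 - x 2 = 0 := sgn_eq_zero (pat1 hx.2.2 2)
    exact ⟨x 0, vec_ext (by norm_num; try linarith) (by norm_num; try linarith) (by norm_num; try linarith)⟩
  · have m1 : (![1, 1, 0] : Fin 3 → ℚ) ∈ cell ((![0, 1, 1, 1, 0, 0], ![1, 1, 0]) : Pat) :=
      mem_cell_of ![1, 1, 0] (![0, 1, 1, 1, 0, 0], ![1, 1, 0]) (by norm_num) (by norm_num) (by norm_num) (by norm_num) (by norm_num [sgn])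
    refine ⟨⟨_, m1⟩, dim_eq_1 (v := ![1, 1, 0]) (fun h => by have := congrFun h 0; norm_num at this) m1 ?_⟩
    intro x hx
    have hA : x 0 - x 1 = 0 := sgn_eq_zero (pat1 hx.2.2 0)
    have hB : x 2 = 0 := sgn_eq_zero (pat2 hx.2.2 2)
    exact ⟨x 0, vec_ext (by norm_num; try linarith) (by norm_num; try linarith) (by norm_num; try linarith)⟩
  · have m1 : (![1, 0, 1] : Fin 3 → ℚ) ∈ cell ((![1, 0, -1, 0, 1, 0], ![1, 0, 1]) : Pat) :=
      mem_cell_of ![1, 0, 1] (![1, 0, -1, 0, 1, 0], ![1, 0, 1]) (by norm_num) (by norm_num) (by norm_num) (by norm_num) (by norm_num [sgn])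
    refine ⟨⟨_, m1⟩, dim_eq_1 (v := ![1, 0, 1]) (fun h => by have := congrFun h 0; norm_num at this) m1 ?_⟩
    intro x hx
    have hA : x 0 - x 2 = 0 := sgn_eq_zero (pat1 hx.2.2 1)
    have hB : x 1 = 0 := sgn_eq_zero (pat2 hx.2.2 1)
    exact ⟨x 0, vec_ext (by norm_num; try linarith) (by norm_num; try linarith) (by norm_num; try linarith)⟩
  · have m1 : (![0, 1, 1] : Fin 3 → ℚ) ∈ cell ((![-1, -1, 0, 0, 0, 1], ![0, 1, 1]) : Pat) :=
      mem_cell_of ![0, 1, 1] (![-1, -1, 0, 0, 0, 1], ![0, 1, 1]) (by norm_num) (by norm_num) (by norm_num) (by norm_num) (by norm_num [sgn])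
    refine ⟨⟨_, m1⟩, dim_eq_1 (v := ![0, 1, 1]) (fun h => by have := congrFun h 1; norm_num at this) m1 ?_⟩
    intro x hx
    have hA : x 1 - x 2 = 0 := sgn_eq_zero (pat1 hx.2.2 2)
    have hB : x 0 = 0 := sgn_eq_zero (pat2 hx.2.2 0)
    exact ⟨x 1, vec_ext (by norm_num; try linarith) (by norm_num; try linarith) (by norm_num; try linarith)⟩
  · have m1 : (![1, 1, 2] : Fin 3 → ℚ) ∈ cell ((![0, -1, -1, 0, 1, 1], ![1, 1, 1]) : Pat) :=
      mem_cell_of ![1, 1, 2] (![0, -1, -1, 0, 1, 1], ![1, 1, 1]) (by norm_num) (by norm_num) (by norm_num) (by norm_num) (by norm_num [sgn])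
    refine ⟨⟨_, m1⟩, dim_eq_1 (v := ![1, 1, 2]) (fun h => by have := congrFun h 0; norm_num at this) m1 ?_⟩
    intro x hx
    have hA : x 0 - x 1 = 0 := sgn_eq_zero (pat1 hx.2.2 0)
    have hB : x 0 + x 1 - x 2 = 0 := sgn_eq_zero (pat1 hx.2.2 3)
    exact ⟨x 0, vec_ext (by norm_num; try linarith) (by norm_num; try linarith) (by norm_num; try linarith)⟩
  · have m1 : (![1, 2, 1] : Fin 3 → ℚ) ∈ cell ((![-1, 0, 1, 1, 0, 1], ![1, 1, 1]) : Pat) :=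
      mem_cell_of ![1, 2, 1] (![-1, 0, 1, 1, 0, 1], ![1, 1, 1]) (by norm_num) (by norm_num) (by norm_num) (by norm_num) (by norm_num [sgn])
    refine ⟨⟨_, m1⟩, dim_eq_1 (v := ![1, 2, 1]) (fun h => by have := congrFun h 0; norm_num at this) m1 ?_⟩
    intro x hx
    have hA : x 0 - x 2 = 0 := sgn_eq_zero (pat1 hx.2.2 1)
    have hB : x 0 + x 2 - x 1 = 0 := sgn_eq_zero (pat1 hx.2.2 4)
    exact ⟨x 0, vec_ext (by norm_num; try linarith) (by norm_num; try linarith) (by norm_num; try linarith)⟩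
  · have m1 : (![2, 1, 1] : Fin 3 → ℚ) ∈ cell ((![1, 1, 0, 1, 1, 0], ![1, 1, 1]) : Pat) :=
      mem_cell_of ![2, 1, 1] (![1, 1, 0, 1, 1, 0], ![1, 1, 1]) (by norm_num) (by norm_num) (by norm_num) (by norm_num) (by norm_num [sgn])
    refine ⟨⟨_, m1⟩, dim_eq_1 (v := ![2, 1, 1]) (fun h => by have := congrFun h 0; norm_num at this) m1 ?_⟩
    intro x hx
    have hA : x 1 - x 2 = 0 := sgn_eq_zero (pat1 hx.2.2 2)
    have hB : x 1 + x 2 - x 0 = 0 := sgn_eq_zero (pat1 hx.2.2 5)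
    exact ⟨x 1, vec_ext (by norm_num; try linarith) (by norm_num; try linarith) (by norm_num; try linarith)⟩


/-! ### Putting it together -/

lemma nodup3 : L3.Nodup := by decide
lemma nodup2 : L2.Nodup := by decide
lemma nodup1 : L1.Nodup := by decide

lemma mem_split {p : Pat} (h : (cell p).Nonempty) : p ∈ L3 ∨ p ∈ L2 ∨ p ∈ L1 := by
  obtain ⟨x, hx⟩ := h
  have hm := classify' x hx.1 hx.2.1
  rw [hx.2.2] at hm
  unfold allP at hm
  rcases List.mem_append.mp hm with h' | h'
  · rcases List.mem_append.mp h' with h'' | h''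
    · exact Or.inl h''
    · exact Or.inr (Or.inl h'')
  · exact Or.inr (Or.inr h')

lemma set_eq_3 : {p : Pat | (cell p).Nonempty ∧ dimOf (cell p) = 3} = ↑L3.toFinset := by
  ext p
  simp only [Set.mem_setOf_eq, Finset.coe_sort_coe, List.coe_toFinset, Set.mem_setOf_eq,
    List.mem_toFinset, Finset.mem_coe]
  constructor
  · rintro ⟨hne, hdim⟩
    rcases mem_split hne with h | h | h
    · exact h
    · have := (L2_prop p h).2; omega
    · have := (L1_prop p h).2; omega
  · intro h
    exact L3_prop p h

lemma set_eq_2 : {p : Pat | (cell p).Nonempty ∧ dimOf (cell p) = 2} = ↑L2.toFinset := by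
  ext p
  simp only [Set.mem_setOf_eq, List.coe_toFinset, List.mem_toFinset, Finset.mem_coe]
  constructor
  · rintro ⟨hne, hdim⟩
    rcases mem_split hne with h | h | h
    · have := (L3_prop p h).2; omega
    · exact h
    · have := (L1_prop p h).2; omega
  · intro h
    exact L2_prop p h

lemma set_eq_1 : {p : Pat | (cell p).Nonempty ∧ dimOf (cell p) = 1} = ↑L1.toFinset := by
  ext p
  simp only [Set.mem_setOf_eq, List.coe_toFinset, List.mem_toFinset, Finset.mem_coe]
  constructor
  · rintro ⟨hne, hdim⟩
    rcases mem_split hne with h | h | h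
    · have := (L3_prop p h).2; omega
    · have := (L2_prop p h).2; omega
    · exact h
  · intro h
    exact L1_prop p h

/-- For the diagonal `SO₃`-action on `(ℂ³)³`: the subdivision of the octant
`Ω = {x ∈ ℚ³ : xᵢ ≥ 0}` by the six hyperplanes `x₁=x₂, x₁=x₃, x₂=x₃,
x₁+x₂=x₃, x₁+x₃=x₂, x₂+x₃=x₁` has exactly 12 three-dimensional cells,
21 two-dimensional cells and 10 one-dimensional cells (33 GIT-classes). -/
theorem stmt_10 :
    Nat.card {p : (Fin 6 → ℤ) × (Fin 3 → ℤ) | (cell p).Nonempty ∧ dimOf (cell p) = 3} = 12 ∧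
    Nat.card {p : (Fin 6 → ℤ) × (Fin 3 → ℤ) | (cell p).Nonempty ∧ dimOf (cell p) = 2} = 21 ∧
    Nat.card {p : (Fin 6 → ℤ) × (Fin 3 → ℤ) | (cell p).Nonempty ∧ dimOf (cell p) = 1} = 10 := by
  refine ⟨?_, ?_, ?_⟩
  · rw [set_eq_3, Nat.card_coe_set_eq, Set.ncard_coe_finset]
    decide
  · rw [set_eq_2, Nat.card_coe_set_eq, Set.ncard_coe_finset]
    decide
  · rw [set_eq_1, Nat.card_coe_set_eq, Set.ncard_coe_finset]
    decide

end Stmt10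
end

section
/- Let I ⊊ {1,...,m_1} and J ⊊ {1,...,m_2} be nonempty subsets. The cone generated by the vectors e_i + f_j with (i ∈ I, j ∈ J) or (i ∉ I, j ∉ J) equals the intersection of the cone {(x,y) : x_i, y_j ≥ 0, Σ_i x_i = Σ_j y_j} with the hyperplane Σ_{i∈I} x_i = Σ_{j∈J} y_j. -/
lemma comp1 {m₁ m₂ : ℕ} (c : Fin m₁ × Fin m₂ → ℚ) (i : Fin m₁) :
    (∑ p : Fin m₁ × Fin m₂, c p • (((Pi.single p.1 1 : Fin m₁ → ℚ), (Pi.single p.2 1 : Fin m₂ → ℚ)))).1 i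
    = ∑ j, c (i, j) := by
  rw [Prod.fst_sum, Finset.sum_apply]
  simp [Pi.single_apply, Fintype.sum_prod_type, mul_ite, Finset.sum_ite_eq, Finset.sum_ite_eq']
  rw [Finset.sum_comm]
  exact Finset.sum_congr rfl fun j _ => by simp

lemma comp2 {m₁ m₂ : ℕ} (c : Fin m₁ × Fin m₂ → ℚ) (j : Fin m₂) :
    (∑ p : Fin m₁ × Fin m₂, c p • (((Pi.single p.1 1 : Fin m₁ → ℚ), (Pi.single p.2 1 : Fin m₂ → ℚ)))).2 j
    = ∑ i, c (i, j) := by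
  rw [Prod.snd_sum, Finset.sum_apply]
  simp [Pi.single_apply, Fintype.sum_prod_type, mul_ite, Finset.sum_ite_eq, Finset.sum_ite_eq']

/-- Orbit cones for `SL(V)` acting on `ℙ(V)^{m₁} × ℙ(V*)^{m₂}` with `m₁, m₂ < n`
(Theorem 4): for nonempty proper subsets `I ⊊ {1,...,m₁}` and `J ⊊ {1,...,m₂}`,
the cone generated by the vectors `eᵢ + fⱼ` with (`i ∈ I, j ∈ J`) or
(`i ∉ I, j ∉ J`) equals the intersection of the weight cone
`{(x,y) : xᵢ, yⱼ ≥ 0, ∑ xᵢ = ∑ yⱼ}` with the hyperplane `∑_{i∈I} xᵢ = ∑_{j∈J} yⱼ`. -/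
theorem stmt_14 {m₁ m₂ : ℕ} (I : Finset (Fin m₁)) (J : Finset (Fin m₂))
    (hI : I.Nonempty) (hI' : I ≠ Finset.univ)
    (hJ : J.Nonempty) (hJ' : J ≠ Finset.univ) :
    {xy : (Fin m₁ → ℚ) × (Fin m₂ → ℚ) | ∃ c : Fin m₁ × Fin m₂ → ℚ,
        (∀ p, 0 ≤ c p) ∧
        (∀ p : Fin m₁ × Fin m₂, ¬((p.1 ∈ I ∧ p.2 ∈ J) ∨ (p.1 ∉ I ∧ p.2 ∉ J)) → c p = 0) ∧
        xy = ∑ p : Fin m₁ × Fin m₂, c p • (((Pi.single p.1 1 : Fin m₁ → ℚ), (Pi.single p.2 1 : Fin m₂ → ℚ)))} =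
    {xy : (Fin m₁ → ℚ) × (Fin m₂ → ℚ) | (∀ i, 0 ≤ xy.1 i) ∧ (∀ j, 0 ≤ xy.2 j) ∧
        (∑ i, xy.1 i = ∑ j, xy.2 j) ∧ (∑ i ∈ I, xy.1 i = ∑ j ∈ J, xy.2 j)} := by
  ext ⟨x, y⟩
  simp only [Set.mem_setOf_eq]
  constructor
  · rintro ⟨c, hc0, hsupp, heq⟩
    have hx : ∀ i, x i = ∑ j, c (i, j) := fun i =>
      (congrArg (fun z => z.1 i) heq).trans (comp1 c i)
    have hy : ∀ j, y j = ∑ i, c (i, j) := fun j =>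
      (congrArg (fun z => z.2 j) heq).trans (comp2 c j)
    refine ⟨fun i => (hx i).symm ▸ Finset.sum_nonneg fun j _ => hc0 _,
      fun j => (hy j).symm ▸ Finset.sum_nonneg fun i _ => hc0 _, ?_, ?_⟩
    · simp only [hx, hy]
      rw [Finset.sum_comm]
    · have key1 : ∀ i ∈ I, (∑ j, c (i, j)) = ∑ j ∈ J, c (i, j) := fun i hi =>
        (Finset.sum_subset (Finset.subset_univ J) fun j _ hj =>
          hsupp (i, j) (by simp; tauto)).symm
      have key2 : ∀ j ∈ J, (∑ i, c (i, j)) = ∑ i ∈ I, c (i, j) := fun j hj =>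
        (Finset.sum_subset (Finset.subset_univ I) fun i _ hi =>
          hsupp (i, j) (by simp; tauto)).symm
      calc ∑ i ∈ I, x i = ∑ i ∈ I, ∑ j ∈ J, c (i, j) :=
            Finset.sum_congr rfl fun i hi => by rw [hx i, key1 i hi]
        _ = ∑ j ∈ J, ∑ i ∈ I, c (i, j) := Finset.sum_comm
        _ = ∑ j ∈ J, y j := Finset.sum_congr rfl fun j hj => by rw [hy j, key2 j hj]
  · rintro ⟨hx, hy, hsum, hIJ⟩
    set S := ∑ i ∈ I, x i with hS
    set T := ∑ i ∈ Iᶜ, x i with hT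
    have hS0 : 0 ≤ S := Finset.sum_nonneg fun i _ => hx i
    have hT0 : 0 ≤ T := Finset.sum_nonneg fun i _ => hx i
    have hSy : ∑ j ∈ J, y j = S := hIJ.symm
    have hTy : ∑ j ∈ Jᶜ, y j = T := by
      have h1 := Finset.sum_add_sum_compl I x
      have h2 := Finset.sum_add_sum_compl J y
      rw [← hS, ← hT] at h1
      rw [hSy] at h2
      linarith [hsum]
    have hxS : ∀ i ∈ I, S = 0 → x i = 0 := fun i hi h0 =>
      (Finset.sum_eq_zero_iff_of_nonneg fun i _ => hx i).mp h0 i hi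
    have hxT : ∀ i ∈ Iᶜ, T = 0 → x i = 0 := fun i hi h0 =>
      (Finset.sum_eq_zero_iff_of_nonneg fun i _ => hx i).mp h0 i hi
    have hyS : ∀ j ∈ J, S = 0 → y j = 0 := fun j hj h0 =>
      (Finset.sum_eq_zero_iff_of_nonneg fun j _ => hy j).mp (hSy.trans h0) j hj
    have hyT : ∀ j ∈ Jᶜ, T = 0 → y j = 0 := fun j hj h0 =>
      (Finset.sum_eq_zero_iff_of_nonneg fun j _ => hy j).mp (hTy.trans h0) j hj
    refine ⟨fun p => if p.1 ∈ I ∧ p.2 ∈ J then x p.1 * y p.2 / S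
        else if p.1 ∉ I ∧ p.2 ∉ J then x p.1 * y p.2 / T else 0, ?_, ?_, ?_⟩
    · intro p
      dsimp only
      split_ifs
      · exact div_nonneg (mul_nonneg (hx _) (hy _)) hS0
      · exact div_nonneg (mul_nonneg (hx _) (hy _)) hT0
      · exact le_refl 0
    · intro p hp
      simp only [not_or, not_and, not_not] at hp
      dsimp only
      split_ifs with h1 h2 <;> tauto
    · refine Prod.ext ?_ ?_ <;> funext k
      · rw [comp1]
        by_cases hk : k ∈ I
        · have : ∀ j : Fin m₂, (if k ∈ I ∧ j ∈ J then x k * y j / S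
              else if k ∉ I ∧ j ∉ J then x k * y j / T else 0)
              = if j ∈ J then x k * y j / S else 0 := fun j => by
            by_cases hj : j ∈ J <;> simp [hk, hj]
          simp only [this]
          rw [Finset.sum_ite_mem, Finset.univ_inter, ← Finset.sum_div, ← Finset.mul_sum, hSy]
          rcases eq_or_ne S 0 with h0 | h0
          · simp [hxS k hk h0]
          · rw [mul_div_assoc, div_self h0, mul_one]
        · have : ∀ j : Fin m₂, (if k ∈ I ∧ j ∈ J then x k * y j / S
              else if k ∉ I ∧ j ∉ J then x k * y j / T else 0)
              = if j ∈ Jᶜ then x k * y j / T else 0 := fun j => by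
            by_cases hj : j ∈ J <;> simp [hk, hj]
          simp only [this]
          rw [Finset.sum_ite_mem, Finset.univ_inter, ← Finset.sum_div, ← Finset.mul_sum, hTy]
          rcases eq_or_ne T 0 with h0 | h0
          · simp [hxT k (Finset.mem_compl.mpr hk) h0]
          · rw [mul_div_assoc, div_self h0, mul_one]
      · rw [comp2]
        by_cases hk : k ∈ J
        · have : ∀ i : Fin m₁, (if i ∈ I ∧ k ∈ J then x i * y k / S
              else if i ∉ I ∧ k ∉ J then x i * y k / T else 0)
              = if i ∈ I then x i * y k / S else 0 := fun i => by
            by_cases hi : i ∈ I <;> simp [hk, hi]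
          simp only [this]
          rw [Finset.sum_ite_mem, Finset.univ_inter, ← Finset.sum_div,
            ← Finset.sum_mul, ← hS]
          rcases eq_or_ne S 0 with h0 | h0
          · simp [hyS k hk h0]
          · rw [mul_comm, mul_div_assoc, div_self h0, mul_one]
        · have : ∀ i : Fin m₁, (if i ∈ I ∧ k ∈ J then x i * y k / S
              else if i ∉ I ∧ k ∉ J then x i * y k / T else 0)
              = if i ∈ Iᶜ then x i * y k / T else 0 := fun i => by
            by_cases hi : i ∈ I <;> simp [hk, hi]
          simp only [this]
          rw [Finset.sum_ite_mem, Finset.univ_inter, ← Finset.sum_div,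
            ← Finset.sum_mul, ← hT]
          rcases eq_or_ne T 0 with h0 | h0
          · simp [hyT k (Finset.mem_compl.mpr hk) h0]
          · rw [mul_comm, mul_div_assoc, div_self h0, mul_one]
end
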